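/- arXiv:2411.11482 — 3 statements merged into one kernel-verified Lean document; each statement's English description precedes it below -/
import Mathlib

section
/- For every pattern τ in S_3, the number of permutations in S_n avoiding τ equals the n-th Catalan number C_n = (1/(n+1))·binomial(2n, n). -/
open List

/-- `σ` contains the pattern `τ ∈ S_3`. -/
def ContainsPattern {n : ℕ} (σ : Equiv.Perm (Fin n)) (τ : Equiv.Perm (Fin 3)) : Prop :=
  ∃ f : Fin 3 → Fin n, StrictMono f ∧ ∀ j k : Fin 3, σ (f j) < σ (f k) ↔ τ j < τ k

namespace CatAv

/-- containment of a 3-letter pattern, given by a relation on the three values -/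
def Ct (R : ℕ → ℕ → ℕ → Prop) (l : List ℕ) : Prop :=
  ∃ a b c : ℕ, [a, b, c] <+ l ∧ R a b c

def R123 (a b c : ℕ) : Prop := a < b ∧ b < c
def R132 (a b c : ℕ) : Prop := a < c ∧ c < b
def R213 (a b c : ℕ) : Prop := b < a ∧ a < c
def R231 (a b c : ℕ) : Prop := c < a ∧ a < b
def R312 (a b c : ℕ) : Prop := b < c ∧ c < a
def R321 (a b c : ℕ) : Prop := c < b ∧ b < a

lemma ct_congr {R R' : ℕ → ℕ → ℕ → Prop} {l : List ℕ}
    (h : ∀ a b c, a ∈ l → b ∈ l → c ∈ l → (R a b c ↔ R' a b c)) : Ct R l ↔ Ct R' l := by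
  constructor <;> rintro ⟨a, b, c, hs, hr⟩ <;> refine ⟨a, b, c, hs, ?_⟩ <;>
    have ha := hs.subset (by simp : a ∈ [a,b,c]) <;>
    have hb := hs.subset (by simp : b ∈ [a,b,c]) <;>
    have hc := hs.subset (by simp : c ∈ [a,b,c])
  · exact (h a b c ha hb hc).1 hr
  · exact (h a b c ha hb hc).2 hr

lemma ct_nil {R} : ¬ Ct R [] := by
  rintro ⟨a, b, c, hs, -⟩
  simpa using hs.length_le

lemma ct_cons {R x xs} : Ct R (x :: xs) ↔ Ct R xs ∨ ∃ b c, [b, c] <+ xs ∧ R x b c := by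
  constructor
  · rintro ⟨a, b, c, hs, hr⟩
    rcases List.sublist_cons_iff.1 hs with h | ⟨r, hr', hsub⟩
    · exact Or.inl ⟨a, b, c, h, hr⟩
    · cases hr'
      exact Or.inr ⟨b, c, hsub, hr⟩
  · rintro (⟨a, b, c, hs, hr⟩ | ⟨b, c, hs, hr⟩)
    · exact ⟨a, b, c, hs.trans (List.sublist_cons_self _ _), hr⟩
    · exact ⟨x, b, c, List.cons_sublist_cons.2 hs, hr⟩

/-- pair-pattern containment -/
def P2 (q : ℕ → ℕ → Prop) (l : List ℕ) : Prop := ∃ b c, [b, c] <+ l ∧ q b c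

lemma p2_nil {q} : ¬ P2 q [] := by
  rintro ⟨a, b, hs, -⟩
  simpa using hs.length_le

lemma p2_cons {q x xs} : P2 q (x :: xs) ↔ P2 q xs ∨ ∃ c ∈ xs, q x c := by
  constructor
  · rintro ⟨b, c, hs, hr⟩
    rcases List.sublist_cons_iff.1 hs with h | ⟨r, hr', hsub⟩
    · exact Or.inl ⟨b, c, h, hr⟩
    · cases hr'
      exact Or.inr ⟨c, (List.singleton_sublist.1 hsub), hr⟩
  · rintro (⟨b, c, hs, hr⟩ | ⟨c, hc, hr⟩)
    · exact ⟨b, c, hs.trans (List.sublist_cons_self _ _), hr⟩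
    · exact ⟨x, c, List.cons_sublist_cons.2 (List.singleton_sublist.2 hc), hr⟩

def permsOf (S : Finset ℕ) : Finset (List ℕ) := (S.sort (·≤·)).permutations.toFinset

lemma mem_permsOf {S : Finset ℕ} {l : List ℕ} :
    l ∈ permsOf S ↔ l.Nodup ∧ l.toFinset = S := by
  rw [permsOf, List.mem_toFinset, List.mem_permutations]
  constructor
  · intro h
    refine ⟨h.nodup_iff.2 (S.sort_nodup (·≤·)), ?_⟩
    ext a
    rw [List.mem_toFinset, h.mem_iff, ← Finset.mem_sort (α := ℕ) (·≤·)]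
  · rintro ⟨hn, ht⟩
    rw [List.perm_ext_iff_of_nodup hn (S.sort_nodup (·≤·))]
    intro a
    rw [← List.mem_toFinset, ht, ← Finset.mem_sort (α := ℕ) (·≤·)]

noncomputable def fset (p : List ℕ → Prop) (s : Finset (List ℕ)) : Finset (List ℕ) :=
  @Finset.filter _ p (Classical.decPred p) s

lemma mem_fset {p s l} : l ∈ fset p s ↔ l ∈ s ∧ p l := by
  rw [fset]
  exact @Finset.mem_filter _ _ (Classical.decPred p) _ _

noncomputable def avoiders (R : ℕ → ℕ → ℕ → Prop) (S : Finset ℕ) : Finset (List ℕ) :=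
  fset (fun l => ¬ Ct R l) (permsOf S)

lemma mem_avoiders {R S l} : l ∈ avoiders R S ↔ (l.Nodup ∧ l.toFinset = S) ∧ ¬ Ct R l := by
  rw [avoiders, mem_fset, mem_permsOf]

lemma fset_congr {p q : List ℕ → Prop} {s : Finset (List ℕ)} (h : ∀ l ∈ s, p l ↔ q l) :
    fset p s = fset q s := by
  ext l
  rw [mem_fset, mem_fset]
  exact and_congr_right fun hl => h l hl

/-! ### splitting a list at a distinguished element -/

lemma split_at_mem {M : ℕ} {l : List ℕ} (hM : M ∈ l) :
    l = l.takeWhile (· ≠ M) ++ M :: (l.dropWhile (· ≠ M)).tail := by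
  induction l with
  | nil => cases hM
  | cons x xs ih =>
    by_cases hx : x = M
    · subst hx
      simp
    · have hM' : M ∈ xs := by
        rcases hM with _ | h
        · exact absurd rfl hx
        · assumption
      have hxb : (decide ¬x = M) = true := by simp [hx]
      simp only [List.takeWhile_cons, List.dropWhile_cons, hxb, if_true, reduceIte]
      rw [List.cons_append]
      exact congrArg (x :: ·) (ih hM')

lemma takeWhile_split {M : ℕ} {l₁ l₂ : List ℕ} (h : M ∉ l₁) :
    (l₁ ++ M :: l₂).takeWhile (· ≠ M) = l₁ ∧
      (l₁ ++ M :: l₂).dropWhile (· ≠ M) = M :: l₂ := by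
  induction l₁ with
  | nil => simp
  | cons x xs ih =>
    have hx : x ≠ M := fun hh => h (hh ▸ List.mem_cons_self)
    have hxs : M ∉ xs := fun hh => h (List.mem_cons_of_mem _ hh)
    have hxb : (decide ¬x = M) = true := by simp [hx]
    obtain ⟨h1, h2⟩ := ih hxs
    constructor
    · rw [List.cons_append]
      simp only [List.takeWhile_cons, hxb, if_true, reduceIte]
      rw [h1]
    · rw [List.cons_append]
      simp only [List.dropWhile_cons, hxb, if_true, reduceIte]
      exact h2

/-! ### decomposition of 132-containment around a maximal element -/

lemma ct132_append {l₁ l₂ : List ℕ} {M : ℕ} (h₁ : ∀ a ∈ l₁, a < M) (h₂ : ∀ a ∈ l₂, a < M) :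
    Ct R132 (l₁ ++ M :: l₂) ↔
      Ct R132 l₁ ∨ Ct R132 l₂ ∨ ∃ a ∈ l₁, ∃ c ∈ l₂, a < c := by
  constructor
  · rintro ⟨a, b, c, hs, hr⟩
    obtain ⟨s, t, hst, hsl, htl⟩ := List.sublist_append_iff.1 hs
    have hsub3 : s <+ [a, b, c] := hst ▸ List.sublist_append_left _ _
    have hlen : s.length ≤ 3 := by simpa using hsub3.length_le
    match s, hlen with
    | [], _ =>
      rw [List.nil_append] at hst
      subst hst
      rcases List.sublist_cons_iff.1 htl with h | ⟨r, hr', hsub⟩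
      · exact Or.inr (Or.inl ⟨a, b, c, h, hr⟩)
      · injection hr' with e1 e2
        subst e1; subst e2
        have hc : c ∈ l₂ := hsub.subset (by simp)
        exact absurd hr.1 (by have := h₂ c hc; omega)
    | [x], _ =>
      simp only [List.cons_append, List.nil_append, List.cons.injEq] at hst
      obtain ⟨rfl, rfl⟩ := hst
      have ha : a ∈ l₁ := hsl.subset (by simp)
      rcases List.sublist_cons_iff.1 htl with h | ⟨r, hr', hsub⟩
      · have hc : c ∈ l₂ := h.subset (by simp)
        exact Or.inr (Or.inr ⟨a, ha, c, hc, hr.1⟩)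
      · injection hr' with e1 e2
        subst e1; subst e2
        have hc : c ∈ l₂ := hsub.subset (by simp)
        exact Or.inr (Or.inr ⟨a, ha, c, hc, hr.1⟩)
    | [x, y], _ =>
      simp only [List.cons_append, List.nil_append, List.cons.injEq] at hst
      obtain ⟨rfl, rfl, rfl⟩ := hst
      have ha : a ∈ l₁ := hsl.subset (by simp)
      have hb : b ∈ l₁ := hsl.subset (by simp)
      rcases List.sublist_cons_iff.1 htl with h | ⟨r, hr', hsub⟩
      · have hc : c ∈ l₂ := h.subset (by simp)
        exact Or.inr (Or.inr ⟨a, ha, c, hc, hr.1⟩)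
      · injection hr' with e1 e2
        subst e1
        exact absurd hr.2 (by have := h₁ b hb; omega)
    | [x, y, z], _ =>
      simp only [List.cons_append, List.nil_append, List.cons.injEq] at hst
      obtain ⟨rfl, rfl, rfl, rfl⟩ := hst
      exact Or.inl ⟨a, b, c, hsl, hr⟩
  · rintro (⟨a, b, c, hs, hr⟩ | ⟨a, b, c, hs, hr⟩ | ⟨a, ha, c, hc, hac⟩)
    · exact ⟨a, b, c, hs.trans (List.sublist_append_left _ _), hr⟩
    · exact ⟨a, b, c, hs.trans ((List.sublist_cons_self _ _).trans
        (List.sublist_append_right _ _)), hr⟩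
    · refine ⟨a, M, c, ?_, hac, h₂ c hc⟩
      have h1 : [a] <+ l₁ := List.singleton_sublist.2 ha
      have h2 : M :: [c] <+ M :: l₂ :=
        List.cons_sublist_cons.2 (List.singleton_sublist.2 hc)
      simpa using h1.append h2

/-! ### partition of a finset into low and high parts -/

lemma partition_sort {T X Y : Finset ℕ} (hU : Y ∪ X = T)
    (hd : ∀ x ∈ X, ∀ y ∈ Y, y < x) :
    T.sort (·≤·) = Y.sort (·≤·) ++ X.sort (·≤·) := by
  refine (fun hp hs => List.Perm.eq_of_pairwise' (r := (·≤·)) (T.pairwise_sort _) hs hp) ?_ ?_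
  · rw [List.perm_ext_iff_of_nodup (T.sort_nodup _) ?_]
    · intro a
      simp only [Finset.mem_sort, List.mem_append, ← hU, Finset.mem_union]
    · rw [List.nodup_append]
      refine ⟨Y.sort_nodup _, X.sort_nodup _, ?_⟩
      intro a haY b haX hab
      subst hab
      have h1 : a ∈ Y := (Finset.mem_sort _).1 haY
      have h2 : a ∈ X := (Finset.mem_sort _).1 haX
      exact absurd (hd a h2 a h1) (lt_irrefl a)
  · show List.Pairwise _ _
    rw [List.pairwise_append]
    refine ⟨Y.pairwise_sort _, X.pairwise_sort _, ?_⟩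
    intro a haY b hbX
    exact le_of_lt (hd b ((Finset.mem_sort _).1 hbX) a ((Finset.mem_sort _).1 haY))

/-! ### the Catalan count for 132-avoiders -/

lemma count132 : ∀ (k : ℕ) (S : Finset ℕ), S.card = k → (avoiders R132 S).card = catalan k := by
  intro k
  induction k using Nat.strong_induction_on with
  | _ k IH =>
    match k with
    | 0 =>
      intro S hS
      have hSe : S = ∅ := Finset.card_eq_zero.1 hS
      subst hSe
      have : avoiders R132 ∅ = {([] : List ℕ)} := by
        ext l
        rw [mem_avoiders]
        simp only [Finset.mem_singleton]
        constructor
        · rintro ⟨⟨-, ht⟩, -⟩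
          exact List.toFinset_eq_empty_iff l |>.1 ht
        · rintro rfl
          exact ⟨⟨List.nodup_nil, by simp⟩, ct_nil⟩
      rw [this]
      simp
    | (m+1) =>
      intro S hS
      have h0 : S.Nonempty := Finset.card_pos.1 (by omega)
      set M := S.max' h0 with hMdef
      have hMS : M ∈ S := S.max'_mem h0
      set T := S.erase M with hTdef
      have hT : T.card = m := by
        rw [hTdef, Finset.card_erase_of_mem hMS, hS]
        omega
      set sl := T.sort (·≤·) with hsldef
      have hsln : sl.Nodup := T.sort_nodup _
      have hsll : sl.length = m := by rw [hsldef, Finset.length_sort, hT]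
      have hslmem : ∀ a, a ∈ sl ↔ a ∈ T := fun a => Finset.mem_sort _
      have hMT : M ∉ T := Finset.notMem_erase _ _
      have hTlt : ∀ a ∈ T, a < M := by
        intro a ha
        have h1 : a ∈ S := Finset.mem_of_mem_erase (hTdef ▸ ha)
        have h2 : a ≠ M := Finset.ne_of_mem_erase (hTdef ▸ ha)
        have := S.le_max' a h1
        omega
      have hbotcard : ∀ j, j ≤ m → ((sl.take j).toFinset).card = j := by
        intro j hj
        rw [List.toFinset_card_of_nodup (hsln.sublist (List.take_sublist _ _)),
          List.length_take, hsll]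
        omega
      have htopcard : ∀ j, j ≤ m → ((sl.drop j).toFinset).card = m - j := by
        intro j hj
        rw [List.toFinset_card_of_nodup (hsln.sublist (List.drop_sublist _ _)),
          List.length_drop, hsll]
      have hdisjtd : ∀ j, (sl.take j).Disjoint (sl.drop j) := by
        intro j
        have := hsln
        rw [← List.take_append_drop j sl, List.nodup_append] at this
        exact fun a ha hb => this.2.2 a ha a hb rfl
      have hcrossjd : ∀ j, ∀ x ∈ sl.take j, ∀ y ∈ sl.drop j, x < y := by
        intro j
        have hst : List.Pairwise (· < ·) sl := List.sortedLT_iff_pairwise.1 T.sortedLT_sort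
        rw [← List.take_append_drop j sl] at hst
        have := List.pairwise_append.1 hst
        exact this.2.2
      have main : (avoiders R132 S).card =
          ((Finset.range (m+1)).sigma fun j =>
            (avoiders R132 (sl.take j).toFinset) ×ˢ (avoiders R132 (sl.drop j).toFinset)).card := by
        refine Finset.card_bij'
          (fun l _ => ⟨((l.dropWhile (· ≠ M)).tail).length,
            (((l.dropWhile (· ≠ M)).tail), l.takeWhile (· ≠ M))⟩)
          (fun p _ => p.2.2 ++ M :: p.2.1) ?hi ?hj ?hleft ?hright
        case hi =>
          -- forward membership
          intro l hl
          obtain ⟨⟨hnd, htf⟩, hav⟩ := mem_avoiders.1 hl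
          have hMl : M ∈ l := by rw [← List.mem_toFinset, htf]; exact hMS
          set l₁ := l.takeWhile (· ≠ M) with hl₁
          set l₂ := (l.dropWhile (· ≠ M)).tail with hl₂
          have heq : l = l₁ ++ M :: l₂ := split_at_mem hMl
          have hnd' : (l₁ ++ M :: l₂).Nodup := heq ▸ hnd
          rw [List.nodup_append] at hnd'
          obtain ⟨hnd₁, hndM, hdisj⟩ := hnd'
          have hnd₂ : l₂.Nodup := (List.nodup_cons.1 hndM).2
          have hMl₂ : M ∉ l₂ := (List.nodup_cons.1 hndM).1
          have hmemS : ∀ a ∈ l, a ∈ S := by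
            intro a ha
            rw [← htf]
            exact List.mem_toFinset.2 ha
          have hlt₁ : ∀ a ∈ l₁, a < M := by
            intro a ha
            have h1 : a ∈ S := hmemS a (heq ▸ List.mem_append_left _ ha)
            have h2 : a ≠ M := fun e => hdisj a ha M List.mem_cons_self e
            have := S.le_max' a h1
            omega
          have hlt₂ : ∀ a ∈ l₂, a < M := by
            intro a ha
            have h1 : a ∈ S := hmemS a
              (heq ▸ List.mem_append_right _ (List.mem_cons_of_mem _ ha))
            have h2 : a ≠ M := fun e => hMl₂ (e ▸ ha)
            have := S.le_max' a h1
            omega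
          rw [heq, ct132_append hlt₁ hlt₂] at hav
          push_neg at hav
          obtain ⟨hav₁, hav₂, hcross0⟩ := hav
          have hcross : ∀ a ∈ l₁, ∀ c ∈ l₂, c < a := by
            intro a ha c hc
            have hne : a ≠ c := fun e => hdisj a ha c (List.mem_cons_of_mem _ hc) e
            have := hcross0 a ha c hc
            omega
          have hpart : (l₂.toFinset) ∪ (l₁.toFinset) = T := by
            ext a
            simp only [Finset.mem_union, List.mem_toFinset, hTdef, Finset.mem_erase]
            constructor
            · rintro (h | h)
              · exact ⟨by have := hlt₂ a h; omega,
                  hmemS a (heq ▸ List.mem_append_right _ (List.mem_cons_of_mem _ h))⟩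
              · exact ⟨by have := hlt₁ a h; omega,
                  hmemS a (heq ▸ List.mem_append_left _ h)⟩
            · rintro ⟨hne, haS⟩
              have : a ∈ l := by rw [← List.mem_toFinset, htf]; exact haS
              rw [heq, List.mem_append, List.mem_cons] at this
              rcases this with h | h | h
              · exact Or.inr h
              · exact absurd h hne
              · exact Or.inl h
          have hsort : sl = l₂.toFinset.sort (·≤·) ++ l₁.toFinset.sort (·≤·) := by
            rw [hsldef]
            exact partition_sort hpart (fun x hx y hy =>
              hcross x (List.mem_toFinset.1 hx) y (List.mem_toFinset.1 hy))
          have hjcard : l₂.toFinset.card = l₂.length := List.toFinset_card_of_nodup hnd₂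
          have hlenl : l.length = m + 1 := by
            rw [← List.toFinset_card_of_nodup hnd, htf, hS]
          have hlen12 : l₁.length + l₂.length = m := by
            have := congrArg List.length heq
            simp only [List.length_append, List.length_cons] at this
            omega
          have hjm : l₂.length ≤ m := by omega
          have htake : sl.take l₂.length = l₂.toFinset.sort (·≤·) := by
            rw [hsort]
            exact List.take_left' (by rw [Finset.length_sort, hjcard])
          have hdrop : sl.drop l₂.length = l₁.toFinset.sort (·≤·) := by
            rw [hsort]
            exact List.drop_left' (by rw [Finset.length_sort, hjcard])
          rw [Finset.mem_sigma, Finset.mem_product]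
          dsimp only
          refine ⟨Finset.mem_range.2 (by omega), ?_, ?_⟩
          · rw [mem_avoiders]
            refine ⟨⟨hnd₂, ?_⟩, hav₂⟩
            rw [htake, Finset.sort_toFinset]
          · rw [mem_avoiders]
            refine ⟨⟨hnd₁, ?_⟩, hav₁⟩
            rw [hdrop, Finset.sort_toFinset]
        case hj =>
          -- backward membership
          rintro ⟨j, p₂, p₁⟩ hp
          dsimp only at hp ⊢
          rw [Finset.mem_sigma, Finset.mem_product] at hp
          dsimp only at hp
          obtain ⟨hjr, hp₂, hp₁⟩ := hp
          have hjm : j ≤ m := by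
            have := Finset.mem_range.1 hjr
            omega
          obtain ⟨⟨hnd₂, htf₂⟩, hav₂⟩ := mem_avoiders.1 hp₂
          obtain ⟨⟨hnd₁, htf₁⟩, hav₁⟩ := mem_avoiders.1 hp₁
          have hmem₂ : ∀ a ∈ p₂, a ∈ T := by
            intro a ha
            have : a ∈ (sl.take j).toFinset := htf₂ ▸ List.mem_toFinset.2 ha
            exact (hslmem a).1 ((List.take_sublist _ _).subset (List.mem_toFinset.1 this))
          have hmem₁ : ∀ a ∈ p₁, a ∈ T := by
            intro a ha
            have : a ∈ (sl.drop j).toFinset := htf₁ ▸ List.mem_toFinset.2 ha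
            exact (hslmem a).1 ((List.drop_sublist _ _).subset (List.mem_toFinset.1 this))
          have hlt₁ : ∀ a ∈ p₁, a < M := fun a ha => hTlt a (hmem₁ a ha)
          have hlt₂ : ∀ a ∈ p₂, a < M := fun a ha => hTlt a (hmem₂ a ha)
          have hcross : ∀ a ∈ p₁, ∀ c ∈ p₂, c < a := by
            intro a ha c hc
            have ha' : a ∈ sl.drop j := by
              have : a ∈ (sl.drop j).toFinset := htf₁ ▸ List.mem_toFinset.2 ha
              exact List.mem_toFinset.1 this
            have hc' : c ∈ sl.take j := by
              have : c ∈ (sl.take j).toFinset := htf₂ ▸ List.mem_toFinset.2 hc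
              exact List.mem_toFinset.1 this
            exact hcrossjd j c hc' a ha'
          rw [mem_avoiders]
          refine ⟨⟨?_, ?_⟩, ?_⟩
          · rw [List.nodup_append]
            refine ⟨hnd₁, ?_, ?_⟩
            · rw [List.nodup_cons]
              exact ⟨fun h => hMT (hmem₂ M h), hnd₂⟩
            · intro a ha₁ b ha₂ hab
              subst hab
              rcases List.mem_cons.1 ha₂ with rfl | h
              · exact hMT (hmem₁ _ ha₁)
              · exact absurd (hcross a ha₁ a h) (lt_irrefl a)
          · ext a
            rw [List.mem_toFinset, List.mem_append, List.mem_cons]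
            constructor
            · rintro (h | rfl | h)
              · exact Finset.mem_of_mem_erase (hTdef ▸ hmem₁ a h)
              · exact hMS
              · exact Finset.mem_of_mem_erase (hTdef ▸ hmem₂ a h)
            · intro haS
              by_cases he : a = M
              · exact Or.inr (Or.inl he)
              · have haT : a ∈ T := by rw [hTdef]; exact Finset.mem_erase.2 ⟨he, haS⟩
                have : a ∈ sl := (hslmem a).2 haT
                rw [← List.take_append_drop j sl, List.mem_append] at this
                rcases this with h | h
                · exact Or.inr (Or.inr (by
                    have : a ∈ (sl.take j).toFinset := List.mem_toFinset.2 h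
                    rw [← htf₂] at this
                    exact List.mem_toFinset.1 this))
                · exact Or.inl (by
                    have : a ∈ (sl.drop j).toFinset := List.mem_toFinset.2 h
                    rw [← htf₁] at this
                    exact List.mem_toFinset.1 this)
          · rw [ct132_append hlt₁ hlt₂]
            rintro (h | h | ⟨a, ha, c, hc, hac⟩)
            · exact hav₁ h
            · exact hav₂ h
            · exact absurd hac (by have := hcross a ha c hc; omega)
        case hleft =>
          intro l hl
          obtain ⟨⟨hnd, htf⟩, -⟩ := mem_avoiders.1 hl
          have hMl : M ∈ l := by rw [← List.mem_toFinset, htf]; exact hMS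
          dsimp only
          exact (split_at_mem hMl).symm
        case hright =>
          rintro ⟨j, p₂, p₁⟩ hp
          dsimp only at hp ⊢
          rw [Finset.mem_sigma, Finset.mem_product] at hp
          dsimp only at hp
          obtain ⟨hjr, hp₂, hp₁⟩ := hp
          have hjm : j ≤ m := by
            have := Finset.mem_range.1 hjr
            omega
          obtain ⟨⟨hnd₂, htf₂⟩, -⟩ := mem_avoiders.1 hp₂
          obtain ⟨⟨hnd₁, htf₁⟩, -⟩ := mem_avoiders.1 hp₁
          have hMp₁ : M ∉ p₁ := by
            intro h
            have : M ∈ (sl.drop j).toFinset := htf₁ ▸ List.mem_toFinset.2 h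
            exact hMT ((hslmem M).1 ((List.drop_sublist _ _).subset (List.mem_toFinset.1 this)))
          obtain ⟨ht1, ht2⟩ := takeWhile_split (l₂ := p₂) hMp₁
          have hlen : p₂.length = j := by
            rw [← List.toFinset_card_of_nodup hnd₂, htf₂]
            exact hbotcard j hjm
          rw [ht1, ht2]
          subst hlen
          rfl
      rw [main, Finset.card_sigma]
      have hterm : ∀ j ∈ Finset.range (m+1),
          ((avoiders R132 (sl.take j).toFinset) ×ˢ (avoiders R132 (sl.drop j).toFinset)).card
            = catalan j * catalan (m - j) := by
        intro j hj
        have hjm : j ≤ m := by have := Finset.mem_range.1 hj; omega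
        rw [Finset.card_product,
          IH j (by omega) _ (hbotcard j hjm),
          IH (m - j) (by omega) _ (htopcard j hjm)]
      rw [Finset.sum_congr rfl hterm, catalan_succ]
      exact (Fin.sum_univ_eq_sum_range (fun i => catalan i * catalan (m - i)) (m+1)).symm

/-! ### structural avoidance predicates -/

def Av123S : ℕ → List ℕ → Prop
  | _, [] => True
  | m, x :: xs => if x < m then Av123S x xs else (∀ y ∈ xs, ¬ (x < y)) ∧ Av123S m xs

def Av132S : ℕ → List ℕ → Prop
  | _, [] => True
  | m, x :: xs => if x < m then Av132S x xs else (∀ y ∈ xs, ¬ (m < y ∧ y < x)) ∧ Av132S m xs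

def DEq : ℕ → List ℕ → List ℕ → Prop
  | _, [], [] => True
  | _, [], _ :: _ => False
  | _, _ :: _, [] => False
  | m, x :: xs, y :: ys => if x < m then x = y ∧ DEq x xs ys else (¬ y < m) ∧ DEq m xs ys

def nmVals : List ℕ → ℕ → List ℕ
  | [], _ => []
  | x :: xs, m => if x < m then nmVals xs x else x :: nmVals xs m

def minsList : List ℕ → ℕ → List ℕ
  | [], _ => []
  | x :: xs, m => if x < m then x :: minsList xs x else minsList xs m

def refill (ch : ℕ → List ℕ → ℕ) : List ℕ → ℕ → List ℕ → List ℕ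
  | [], _, _ => []
  | x :: xs, m, R =>
    if x < m then x :: refill ch xs x R
    else ch m R :: refill ch xs m (R.erase (ch m R))

/-- number of non-minimum slots seen while the running minimum is still `≥ t` -/
def nmA : List ℕ → ℕ → ℕ → ℕ
  | [], _, _ => 0
  | x :: xs, m, t => if x < m then nmA xs x t else (if t ≤ m then 1 else 0) + nmA xs m t

def Inv (m : ℕ) (R l : List ℕ) : Prop :=
  ∀ t, nmA l m t ≤ (R.filter (fun y => t < y)).length

lemma nmA_eq_zero : ∀ {l : List ℕ} {m t}, m < t → nmA l m t = 0 := by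
  intro l
  induction l with
  | nil => intro m t h; rfl
  | cons x xs ih =>
    intro m t h
    rw [nmA]
    by_cases hx : x < m
    · rw [if_pos hx]
      exact ih (lt_trans hx h)
    · rw [if_neg hx, if_neg (by omega : ¬ t ≤ m)]
      rw [ih h]

lemma inv_nonempty {m : ℕ} {R : List ℕ} {x : ℕ} {xs : List ℕ}
    (hI : Inv m R (x :: xs)) (hx : ¬ x < m) : ∃ y ∈ R, m < y := by
  have h := hI m
  rw [nmA, if_neg hx, if_pos (le_refl m)] at h
  have : (R.filter (fun y => m < y)).length ≥ 1 := by omega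
  cases hF : R.filter (fun y => decide (m < y)) with
  | nil => rw [hF] at this; simp at this
  | cons b bs =>
    have hb : b ∈ R.filter (fun y => decide (m < y)) := by rw [hF]; exact List.mem_cons_self
    rw [List.mem_filter] at hb
    exact ⟨b, hb.1, by simpa using hb.2⟩

lemma filter_erase_length {R : List ℕ} {y : ℕ} {p : ℕ → Bool}
    (hy : y ∈ R) (hp : p y = true) :
    (R.filter p).length = ((R.erase y).filter p).length + 1 := by
  have h1 : R.Perm (y :: R.erase y) := List.perm_cons_erase hy
  have h2 := (h1.filter p).length_eq
  rw [h2, List.filter_cons, if_pos hp, List.length_cons]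

lemma inv_step_min {m : ℕ} {R : List ℕ} {x : ℕ} {xs : List ℕ}
    (hI : Inv m R (x :: xs)) (hx : x < m) : Inv x R xs := by
  intro t
  have := hI t
  rwa [nmA, if_pos hx] at this

lemma inv_step_nonmin {m : ℕ} {R : List ℕ} {x y : ℕ} {xs : List ℕ}
    (hI : Inv m R (x :: xs)) (hx : ¬ x < m) (hyR : y ∈ R) (hmy : m < y) :
    Inv m (R.erase y) xs := by
  intro t
  have h := hI t
  rw [nmA, if_neg hx] at h
  by_cases ht : t ≤ m
  · rw [if_pos ht] at h
    rw [filter_erase_length hyR (by simpa using lt_of_le_of_lt ht hmy)] at h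
    omega
  · rw [nmA_eq_zero (by omega : m < t)]
    exact Nat.zero_le _

/-! ### choice functions -/

def gch (m : ℕ) (R : List ℕ) : ℕ := ((R.filter (fun y => m < y)).min?).getD 0

def mch (_ : ℕ) (R : List ℕ) : ℕ := (R.max?).getD 0

lemma gch_spec {m : ℕ} {R : List ℕ} (h : ∃ y ∈ R, m < y) :
    gch m R ∈ R ∧ m < gch m R ∧ ∀ z ∈ R, m < z → gch m R ≤ z := by
  obtain ⟨y, hy, hmy⟩ := h
  obtain ⟨a, ha⟩ : ∃ a, (R.filter (fun y => decide (m < y))).min? = some a := by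
    cases hF : R.filter (fun y => decide (m < y)) with
    | nil =>
      rw [List.filter_eq_nil_iff] at hF
      exact absurd (by simpa using hmy) (hF y hy)
    | cons b bs => exact ⟨_, List.min?_cons⟩
  have hg : gch m R = a := by rw [gch, ha, Option.getD_some]
  rw [List.min?_eq_some_iff'] at ha
  obtain ⟨haF, hmin⟩ := ha
  rw [List.mem_filter] at haF
  refine ⟨hg ▸ haF.1, hg ▸ (by simpa using haF.2), ?_⟩
  intro z hz hmz
  rw [hg]
  exact hmin z (List.mem_filter.2 ⟨hz, by simpa using hmz⟩)

lemma mch_spec {m : ℕ} {R : List ℕ} (h : ∃ y ∈ R, m < y) :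
    mch m R ∈ R ∧ m < mch m R ∧ ∀ z ∈ R, z ≤ mch m R := by
  obtain ⟨y, hy, hmy⟩ := h
  obtain ⟨a, ha⟩ : ∃ a, R.max? = some a := by
    cases R with
    | nil => cases hy
    | cons b bs => exact ⟨_, List.max?_cons⟩
  have hg : mch m R = a := by rw [mch, ha, Option.getD_some]
  rw [List.max?_eq_some_iff'] at ha
  obtain ⟨haR, hmax⟩ := ha
  exact ⟨hg ▸ haR, hg ▸ lt_of_lt_of_le hmy (hmax y hy), fun z hz => hg ▸ hmax z hz⟩

/-! ### properties of refill -/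

section Refill

variable {ch : ℕ → List ℕ → ℕ}
  (hch : ∀ m (R : List ℕ), (∃ y ∈ R, m < y) → ch m R ∈ R ∧ m < ch m R)

include hch

lemma refill_subset : ∀ (l : List ℕ) (m : ℕ) (R : List ℕ), Inv m R l →
    ∀ v ∈ refill ch l m R, v < m ∨ v ∈ R := by
  intro l
  induction l with
  | nil => intro m R _ v hv; rw [refill] at hv; cases hv
  | cons x xs ih =>
    intro m R hI v hv
    rw [refill] at hv
    by_cases hx : x < m
    · rw [if_pos hx] at hv
      rcases List.mem_cons.1 hv with rfl | hv'
      · exact Or.inl hx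
      · rcases ih x R (inv_step_min hI hx) v hv' with h | h
        · exact Or.inl (lt_trans h hx)
        · exact Or.inr h
    · rw [if_neg hx] at hv
      obtain ⟨hcm, hcgt⟩ := hch m R (inv_nonempty hI hx)
      rcases List.mem_cons.1 hv with rfl | hv'
      · exact Or.inr hcm
      · rcases ih m _ (inv_step_nonmin hI hx hcm hcgt) v hv' with h | h
        · exact Or.inl h
        · exact Or.inr (List.mem_of_mem_erase h)

omit hch in
lemma nmVals_length : ∀ (l : List ℕ) (m : ℕ), (nmVals l m).length = nmA l m 0 := by
  intro l
  induction l with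
  | nil => intro m; rfl
  | cons x xs ih =>
    intro m
    rw [nmVals, nmA]
    by_cases hx : x < m
    · rw [if_pos hx, if_pos hx, ih]
    · rw [if_neg hx, if_neg hx, if_pos (Nat.zero_le m), List.length_cons, ih]
      omega

lemma refill_perm : ∀ (l : List ℕ) (m : ℕ) (R : List ℕ), Inv m R l →
    R.length = nmA l m 0 →
    (refill ch l m R).Perm (minsList l m ++ R) := by
  intro l
  induction l with
  | nil =>
    intro m R _ hlen
    rw [refill, minsList]
    have : R = [] := List.length_eq_zero_iff.1 (by rw [hlen]; rfl)
    simp [this]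
  | cons x xs ih =>
    intro m R hI hlen
    rw [refill, minsList]
    rw [nmA] at hlen
    by_cases hx : x < m
    · rw [if_pos hx, if_pos hx]
      rw [if_pos hx] at hlen
      exact ((ih x R (inv_step_min hI hx) hlen).cons x).trans (List.Perm.refl _)
    · rw [if_neg hx, if_neg hx]
      rw [if_neg hx, if_pos (Nat.zero_le m)] at hlen
      obtain ⟨hcm, hcgt⟩ := hch m R (inv_nonempty hI hx)
      have hlen' : (R.erase (ch m R)).length = nmA xs m 0 := by
        rw [List.length_erase_of_mem hcm]
        omega
      have h1 := ih m _ (inv_step_nonmin hI hx hcm hcgt) hlen'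
      have h4 : (ch m R :: (minsList xs m ++ R.erase (ch m R))).Perm
          (minsList xs m ++ ch m R :: R.erase (ch m R)) := List.perm_middle.symm
      exact (h1.cons _).trans
        (h4.trans (List.Perm.append_left _ (List.perm_cons_erase hcm).symm))

lemma refill_deq : ∀ (l : List ℕ) (m : ℕ) (R : List ℕ), Inv m R l →
    DEq m l (refill ch l m R) := by
  intro l
  induction l with
  | nil => intro m R _; rw [refill, DEq]; trivial
  | cons x xs ih =>
    intro m R hI
    rw [refill]
    by_cases hx : x < m
    · rw [if_pos hx, DEq, if_pos hx]
      exact ⟨rfl, ih x R (inv_step_min hI hx)⟩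
    · obtain ⟨hcm, hcgt⟩ := hch m R (inv_nonempty hI hx)
      rw [if_neg hx, DEq, if_neg hx]
      exact ⟨by omega, ih m _ (inv_step_nonmin hI hx hcm hcgt)⟩

end Refill

lemma refill_greedy : ∀ (l : List ℕ) (m : ℕ) (R : List ℕ), Inv m R l →
    Av132S m (refill gch l m R) := by
  have hgch : ∀ (m : ℕ) (R : List ℕ), (∃ y ∈ R, m < y) → gch m R ∈ R ∧ m < gch m R :=
    fun m R h => ⟨(gch_spec h).1, (gch_spec h).2.1⟩
  intro l
  induction l with
  | nil => intro m R _; rw [refill, Av132S]; trivial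
  | cons x xs ih =>
    intro m R hI
    rw [refill]
    by_cases hx : x < m
    · rw [if_pos hx, Av132S, if_pos hx]
      exact ih x R (inv_step_min hI hx)
    · rw [if_neg hx]
      have hne := inv_nonempty hI hx
      obtain ⟨hcm, hcgt, hcmin⟩ := gch_spec hne
      have hI' := inv_step_nonmin hI hx hcm hcgt
      rw [Av132S, if_neg (by omega : ¬ gch m R < m)]
      refine ⟨?_, ih m _ hI'⟩
      intro z hz
      rcases refill_subset hgch xs m _ hI' z hz with h | h
      · omega
      · have hzR : z ∈ R := List.mem_of_mem_erase h
        intro ⟨hmz, hzy⟩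
        exact absurd (hcmin z hzR hmz) (by omega)

lemma refill_maxx : ∀ (l : List ℕ) (m : ℕ) (R : List ℕ), Inv m R l →
    Av123S m (refill mch l m R) := by
  have hmch : ∀ (m : ℕ) (R : List ℕ), (∃ y ∈ R, m < y) → mch m R ∈ R ∧ m < mch m R :=
    fun m R h => ⟨(mch_spec h).1, (mch_spec h).2.1⟩
  intro l
  induction l with
  | nil => intro m R _; rw [refill, Av123S]; trivial
  | cons x xs ih =>
    intro m R hI
    rw [refill]
    by_cases hx : x < m
    · rw [if_pos hx, Av123S, if_pos hx]
      exact ih x R (inv_step_min hI hx)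
    · rw [if_neg hx]
      have hne := inv_nonempty hI hx
      obtain ⟨hcm, hcgt, hcmax⟩ := mch_spec hne
      have hI' := inv_step_nonmin hI hx hcm hcgt
      rw [Av123S, if_neg (by omega : ¬ mch m R < m)]
      refine ⟨?_, ih m _ hI'⟩
      intro z hz
      rcases refill_subset hmch xs m _ hI' z hz with h | h
      · omega
      · have := hcmax z (List.mem_of_mem_erase h)
        omega

lemma inv_init : ∀ (l : List ℕ) (m : ℕ), l.Nodup → m ∉ l → Inv m (nmVals l m) l := by
  intro l
  induction l with
  | nil => intro m _ _ t; exact Nat.zero_le _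
  | cons x xs ih =>
    intro m hnd hm t
    obtain ⟨hx1, hnd'⟩ := List.nodup_cons.1 hnd
    have hmx : m ≠ x := fun e => hm (e ▸ List.mem_cons_self)
    have hmxs : m ∉ xs := fun h => hm (List.mem_cons_of_mem _ h)
    rw [nmA, nmVals]
    by_cases hx : x < m
    · rw [if_pos hx, if_pos hx]
      exact ih x hnd' hx1 t
    · rw [if_neg hx, if_neg hx]
      by_cases ht : t ≤ m
      · rw [if_pos ht, List.filter_cons,
          if_pos (by simpa using (by omega : t < x))]
        have := ih m hnd' hmxs t
        rw [List.length_cons]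
        omega
      · rw [if_neg ht, nmA_eq_zero (by omega : m < t)]
        exact Nat.zero_le _

lemma mins_nmVals_perm : ∀ (l : List ℕ) (m : ℕ), (minsList l m ++ nmVals l m).Perm l := by
  intro l
  induction l with
  | nil => intro m; rw [minsList, nmVals]; rfl
  | cons x xs ih =>
    intro m
    rw [minsList, nmVals]
    by_cases hx : x < m
    · rw [if_pos hx, if_pos hx, List.cons_append]
      exact (ih x).cons x
    · rw [if_neg hx, if_neg hx]
      exact List.perm_middle.trans ((ih m).cons x)

lemma perm_toFinset {l l' : List ℕ} (h : l.Perm l') : l.toFinset = l'.toFinset := by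
  ext a
  rw [List.mem_toFinset, List.mem_toFinset, h.mem_iff]

lemma deq_symm : ∀ (l l' : List ℕ) (m : ℕ), DEq m l l' → DEq m l' l := by
  intro l
  induction l with
  | nil =>
    intro l' m h
    cases l' with
    | nil => trivial
    | cons y ys => exact h.elim
  | cons x xs ih =>
    intro l' m h
    cases l' with
    | nil => exact h.elim
    | cons y ys =>
      rw [DEq] at h ⊢
      by_cases hx : x < m
      · rw [if_pos hx] at h
        obtain ⟨rfl, h2⟩ := h
        rw [if_pos hx]
        exact ⟨rfl, ih ys x h2⟩
      · rw [if_neg hx] at h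
        obtain ⟨hy, h2⟩ := h
        rw [if_neg hy]
        exact ⟨hx, ih ys m h2⟩

lemma deq_trans : ∀ (l l' l'' : List ℕ) (m : ℕ), DEq m l l' → DEq m l' l'' → DEq m l l'' := by
  intro l
  induction l with
  | nil =>
    intro l' l'' m h h'
    cases l' with
    | nil => exact h'
    | cons y ys => exact h.elim
  | cons x xs ih =>
    intro l' l'' m h h'
    cases l' with
    | nil => exact h.elim
    | cons y ys =>
      cases l'' with
      | nil => exact h'.elim
      | cons z zs =>
        rw [DEq] at h h' ⊢
        by_cases hx : x < m
        · rw [if_pos hx] at h ⊢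
          obtain ⟨rfl, h2⟩ := h
          rw [if_pos hx] at h'
          obtain ⟨rfl, h2'⟩ := h'
          exact ⟨rfl, ih ys zs x h2 h2'⟩
        · rw [if_neg hx] at h ⊢
          obtain ⟨hy, h2⟩ := h
          rw [if_neg hy] at h'
          obtain ⟨hz, h2'⟩ := h'
          exact ⟨hz, ih ys zs m h2 h2'⟩

lemma head_tail_toFinset {x : ℕ} {xs ys : List ℕ} (hx : x ∉ xs) (hy : x ∉ ys)
    (h : (x :: xs).toFinset = (x :: ys).toFinset) : xs.toFinset = ys.toFinset := by
  ext a
  rw [List.mem_toFinset, List.mem_toFinset]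
  constructor
  · intro ha
    have : a ∈ (x :: ys).toFinset := h ▸ (by simp [ha])
    rcases List.mem_cons.1 (List.mem_toFinset.1 this) with rfl | h'
    · exact absurd ha hx
    · exact h'
  · intro ha
    have h2 : a ∈ (x :: ys).toFinset := by simp [ha]
    rw [← h] at h2
    rcases List.mem_cons.1 (List.mem_toFinset.1 h2) with rfl | h'
    · exact absurd ha hy
    · exact h'

lemma uniq123 : ∀ (l l' : List ℕ) (m : ℕ), l.Nodup → l'.Nodup →
    l.toFinset = l'.toFinset → Av123S m l → Av123S m l' → DEq m l l' → l = l' := by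
  intro l
  induction l with
  | nil =>
    intro l' m _ _ _ _ _ hd
    cases l' with
    | nil => rfl
    | cons y ys => exact hd.elim
  | cons x xs ih =>
    intro l' m hnd hnd' htf hA hA' hd
    cases l' with
    | nil => exact hd.elim
    | cons y ys =>
      obtain ⟨hx1, hndxs⟩ := List.nodup_cons.1 hnd
      obtain ⟨hy1, hndys⟩ := List.nodup_cons.1 hnd'
      rw [DEq] at hd
      rw [Av123S] at hA hA'
      by_cases hx : x < m
      · rw [if_pos hx] at hd hA
        obtain ⟨rfl, hd2⟩ := hd
        rw [if_pos hx] at hA'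
        exact congrArg (x :: ·) (ih ys x hndxs hndys
          (head_tail_toFinset hx1 hy1 htf) hA hA' hd2)
      · rw [if_neg hx] at hd hA
        obtain ⟨hy, hd2⟩ := hd
        rw [if_neg hy] at hA'
        obtain ⟨hcl, hA2⟩ := hA
        obtain ⟨hcl', hA2'⟩ := hA'
        have hxy : x = y := by
          by_contra hne
          rcases Nat.lt_or_ge x y with hlt | hge
          · have : y ∈ (x :: xs).toFinset := htf ▸ (by simp)
            rcases List.mem_cons.1 (List.mem_toFinset.1 this) with e | h'
            · omega
            · exact hcl y h' hlt
          · have hyx : y < x := by omega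
            have : x ∈ (y :: ys).toFinset := htf ▸ (by simp)
            rcases List.mem_cons.1 (List.mem_toFinset.1 this) with e | h'
            · omega
            · exact hcl' x h' hyx
        subst hxy
        exact congrArg (x :: ·) (ih ys m hndxs hndys
          (head_tail_toFinset hx1 hy1 htf) hA2 hA2' hd2)

lemma uniq132 : ∀ (l l' : List ℕ) (m : ℕ), l.Nodup → l'.Nodup → m ∉ l → m ∉ l' →
    l.toFinset = l'.toFinset → Av132S m l → Av132S m l' → DEq m l l' → l = l' := by
  intro l
  induction l with
  | nil =>
    intro l' m _ _ _ _ _ _ _ hd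
    cases l' with
    | nil => rfl
    | cons y ys => exact hd.elim
  | cons x xs ih =>
    intro l' m hnd hnd' hml hml' htf hA hA' hd
    cases l' with
    | nil => exact hd.elim
    | cons y ys =>
      obtain ⟨hx1, hndxs⟩ := List.nodup_cons.1 hnd
      obtain ⟨hy1, hndys⟩ := List.nodup_cons.1 hnd'
      have hmx : m ≠ x := fun e => hml (e ▸ List.mem_cons_self)
      have hmy : m ≠ y := fun e => hml' (e ▸ List.mem_cons_self)
      have hmxs : m ∉ xs := fun h => hml (List.mem_cons_of_mem _ h)
      have hmys : m ∉ ys := fun h => hml' (List.mem_cons_of_mem _ h)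
      rw [DEq] at hd
      rw [Av132S] at hA hA'
      by_cases hx : x < m
      · rw [if_pos hx] at hd hA
        obtain ⟨rfl, hd2⟩ := hd
        rw [if_pos hx] at hA'
        exact congrArg (x :: ·) (ih ys x hndxs hndys hx1 hy1
          (head_tail_toFinset hx1 hy1 htf) hA hA' hd2)
      · rw [if_neg hx] at hd hA
        obtain ⟨hy, hd2⟩ := hd
        rw [if_neg hy] at hA'
        obtain ⟨hcl, hA2⟩ := hA
        obtain ⟨hcl', hA2'⟩ := hA'
        have hxy : x = y := by
          by_contra hne
          rcases Nat.lt_or_ge x y with hlt | hge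
          · have : x ∈ (y :: ys).toFinset := htf ▸ (by simp)
            rcases List.mem_cons.1 (List.mem_toFinset.1 this) with e | h'
            · omega
            · exact hcl' x h' ⟨by omega, hlt⟩
          · have hyx : y < x := by omega
            have : y ∈ (x :: xs).toFinset := htf ▸ (by simp)
            rcases List.mem_cons.1 (List.mem_toFinset.1 this) with e | h'
            · omega
            · exact hcl y h' ⟨by omega, hyx⟩
        subst hxy
        exact congrArg (x :: ·) (ih ys m hndxs hndys hmxs hmys
          (head_tail_toFinset hx1 hy1 htf) hA2 hA2' hd2)

/-! ### equivalence of structural predicates with pattern avoidance -/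

lemma e123 : ∀ (l : List ℕ) (m : ℕ), l.Nodup → m ∉ l →
    (Av123S m l ↔ ¬ Ct R123 l ∧ ¬ P2 (fun b c => m < b ∧ b < c) l) := by
  intro l
  induction l with
  | nil =>
    intro m _ _
    rw [Av123S]
    exact ⟨fun _ => ⟨ct_nil, p2_nil⟩, fun _ => trivial⟩
  | cons x xs ih =>
    intro m hnd hm
    obtain ⟨hx1, hnd'⟩ := List.nodup_cons.1 hnd
    have hmx : m ≠ x := fun e => hm (e ▸ List.mem_cons_self)
    have hmxs : m ∉ xs := fun h => hm (List.mem_cons_of_mem _ h)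
    rw [Av123S, ct_cons, p2_cons]
    by_cases hx : x < m
    · have hxxs : x ∉ xs := hx1
      rw [if_pos hx, ih x hnd' hxxs]
      constructor
      · rintro ⟨hct, hp2⟩
        constructor
        · rintro (h | ⟨b, c, hs, h1, h2⟩)
          · exact hct h
          · exact hp2 ⟨b, c, hs, h1, h2⟩
        · rintro (⟨b, c, hs, h1, h2⟩ | ⟨c, hc, h1, h2⟩)
          · exact hp2 ⟨b, c, hs, by omega, h2⟩
          · omega
      · rintro ⟨hct, hp2⟩
        refine ⟨fun h => hct (Or.inl h), ?_⟩
        rintro ⟨b, c, hs, h1, h2⟩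
        exact hct (Or.inr ⟨b, c, hs, h1, h2⟩)
    · have hmlt : m < x := by omega
      rw [if_neg hx, ih m hnd' hmxs]
      constructor
      · rintro ⟨hcl, hct, hp2⟩
        constructor
        · rintro (h | ⟨b, c, hs, h1, h2⟩)
          · exact hct h
          · exact hcl b (hs.subset (by simp)) h1
        · rintro (h | ⟨c, hc, h1, h2⟩)
          · exact hp2 h
          · exact hcl c hc h2
      · rintro ⟨hct, hp2⟩
        refine ⟨?_, fun h => hct (Or.inl h), fun h => hp2 (Or.inl h)⟩
        intro y hy hxy
        exact hp2 (Or.inr ⟨y, hy, hmlt, hxy⟩)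

lemma e132 : ∀ (l : List ℕ) (m : ℕ),
    (Av132S m l ↔ ¬ Ct R132 l ∧ ¬ P2 (fun b c => m < c ∧ c < b) l) := by
  intro l
  induction l with
  | nil =>
    intro m
    rw [Av132S]
    exact ⟨fun _ => ⟨ct_nil, p2_nil⟩, fun _ => trivial⟩
  | cons x xs ih =>
    intro m
    rw [Av132S, ct_cons, p2_cons]
    by_cases hx : x < m
    · rw [if_pos hx, ih x]
      constructor
      · rintro ⟨hct, hp2⟩
        constructor
        · rintro (h | ⟨b, c, hs, h1, h2⟩)
          · exact hct h
          · exact hp2 ⟨b, c, hs, h1, h2⟩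
        · rintro (⟨b, c, hs, h1, h2⟩ | ⟨c, hc, h1, h2⟩)
          · exact hp2 ⟨b, c, hs, by omega, h2⟩
          · omega
      · rintro ⟨hct, hp2⟩
        refine ⟨fun h => hct (Or.inl h), ?_⟩
        rintro ⟨b, c, hs, h1, h2⟩
        exact hct (Or.inr ⟨b, c, hs, h1, h2⟩)
    · rw [if_neg hx, ih m]
      constructor
      · rintro ⟨hcl, hct, hp2⟩
        constructor
        · rintro (h | ⟨b, c, hs, h1, h2⟩)
          · exact hct h
          · exact hp2 ⟨b, c, hs, by omega, h2⟩
        · rintro (h | ⟨c, hc, h1, h2⟩)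
          · exact hp2 h
          · exact hcl c hc ⟨h1, h2⟩
      · rintro ⟨hct, hp2⟩
        refine ⟨?_, fun h => hct (Or.inl h), fun h => hp2 (Or.inl h)⟩
        intro y hy ⟨hmy, hyx⟩
        exact hp2 (Or.inr ⟨y, hy, hmy, hyx⟩)

/-! ### the Simion–Schmidt count equality -/

lemma ss_card {S : Finset ℕ} {m : ℕ} (hm : m ∉ S) :
    (fset (fun l => Av123S m l) (permsOf S)).card =
      (fset (fun l => Av132S m l) (permsOf S)).card := by
  have hgch : ∀ (m : ℕ) (R : List ℕ), (∃ y ∈ R, m < y) → gch m R ∈ R ∧ m < gch m R :=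
    fun m R h => ⟨(gch_spec h).1, (gch_spec h).2.1⟩
  have hmch : ∀ (m : ℕ) (R : List ℕ), (∃ y ∈ R, m < y) → mch m R ∈ R ∧ m < mch m R :=
    fun m R h => ⟨(mch_spec h).1, (mch_spec h).2.1⟩
  refine Finset.card_bij' (fun l _ => refill gch l m (nmVals l m))
    (fun l _ => refill mch l m (nmVals l m)) ?hi ?hj ?hleft ?hright
  case hi =>
    intro l hl
    obtain ⟨hlp, hA⟩ := mem_fset.1 hl
    obtain ⟨hnd, htf⟩ := mem_permsOf.1 hlp
    have hml : m ∉ l := fun h => hm (htf ▸ List.mem_toFinset.2 h)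
    have hperm : (refill gch l m (nmVals l m)).Perm l :=
      (refill_perm hgch l m _ (inv_init l m hnd hml) (nmVals_length l m)).trans
        (mins_nmVals_perm l m)
    rw [mem_fset, mem_permsOf]
    exact ⟨⟨hperm.nodup_iff.2 hnd, (perm_toFinset hperm).trans htf⟩,
      refill_greedy l m _ (inv_init l m hnd hml)⟩
  case hj =>
    intro l hl
    obtain ⟨hlp, hA⟩ := mem_fset.1 hl
    obtain ⟨hnd, htf⟩ := mem_permsOf.1 hlp
    have hml : m ∉ l := fun h => hm (htf ▸ List.mem_toFinset.2 h)
    have hperm : (refill mch l m (nmVals l m)).Perm l :=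
      (refill_perm hmch l m _ (inv_init l m hnd hml) (nmVals_length l m)).trans
        (mins_nmVals_perm l m)
    rw [mem_fset, mem_permsOf]
    exact ⟨⟨hperm.nodup_iff.2 hnd, (perm_toFinset hperm).trans htf⟩,
      refill_maxx l m _ (inv_init l m hnd hml)⟩
  case hleft =>
    intro l hl
    obtain ⟨hlp, hA⟩ := mem_fset.1 hl
    obtain ⟨hnd, htf⟩ := mem_permsOf.1 hlp
    have hml : m ∉ l := fun h => hm (htf ▸ List.mem_toFinset.2 h)
    have hIl := inv_init l m hnd hml
    set Φ := refill gch l m (nmVals l m) with hΦ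
    have hperm : Φ.Perm l :=
      (refill_perm hgch l m _ hIl (nmVals_length l m)).trans (mins_nmVals_perm l m)
    have hndΦ : Φ.Nodup := hperm.nodup_iff.2 hnd
    have hmlΦ : m ∉ Φ := fun h => hml (hperm.mem_iff.1 h)
    have hIΦ := inv_init Φ m hndΦ hmlΦ
    have hpermΨ : (refill mch Φ m (nmVals Φ m)).Perm Φ :=
      (refill_perm hmch Φ m _ hIΦ (nmVals_length Φ m)).trans (mins_nmVals_perm Φ m)
    have d1 : DEq m l Φ := refill_deq hgch l m _ hIl
    have d2 : DEq m Φ (refill mch Φ m (nmVals Φ m)) := refill_deq hmch Φ m _ hIΦ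
    exact (uniq123 l (refill mch Φ m (nmVals Φ m)) m hnd
      (hpermΨ.nodup_iff.2 hndΦ)
      ((perm_toFinset (hpermΨ.trans hperm)).symm)
      hA (refill_maxx Φ m _ hIΦ) (deq_trans _ _ _ _ d1 d2)).symm
  case hright =>
    intro l hl
    obtain ⟨hlp, hA⟩ := mem_fset.1 hl
    obtain ⟨hnd, htf⟩ := mem_permsOf.1 hlp
    have hml : m ∉ l := fun h => hm (htf ▸ List.mem_toFinset.2 h)
    have hIl := inv_init l m hnd hml
    set Φ := refill mch l m (nmVals l m) with hΦ
    have hperm : Φ.Perm l :=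
      (refill_perm hmch l m _ hIl (nmVals_length l m)).trans (mins_nmVals_perm l m)
    have hndΦ : Φ.Nodup := hperm.nodup_iff.2 hnd
    have hmlΦ : m ∉ Φ := fun h => hml (hperm.mem_iff.1 h)
    have hIΦ := inv_init Φ m hndΦ hmlΦ
    have hpermΨ : (refill gch Φ m (nmVals Φ m)).Perm Φ :=
      (refill_perm hgch Φ m _ hIΦ (nmVals_length Φ m)).trans (mins_nmVals_perm Φ m)
    have d1 : DEq m l Φ := refill_deq hmch l m _ hIl
    have d2 : DEq m Φ (refill gch Φ m (nmVals Φ m)) := refill_deq hgch Φ m _ hIΦ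
    exact (uniq132 l (refill gch Φ m (nmVals Φ m)) m hnd
      (hpermΨ.nodup_iff.2 hndΦ) hml
      (fun h => hmlΦ (hpermΨ.mem_iff.1 h))
      ((perm_toFinset (hpermΨ.trans hperm)).symm)
      hA (refill_greedy Φ m _ hIΦ) (deq_trans _ _ _ _ d1 d2)).symm

lemma count123_eq_132 (n : ℕ) :
    (avoiders R123 (Finset.range n)).card = (avoiders R132 (Finset.range n)).card := by
  have hbd : ∀ l ∈ permsOf (Finset.range n), ∀ a ∈ l, a < n := by
    intro l hl a ha
    obtain ⟨hnd, htf⟩ := mem_permsOf.1 hl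
    exact Finset.mem_range.1 (htf ▸ List.mem_toFinset.2 ha)
  have h1 : avoiders R123 (Finset.range n) =
      fset (fun l => Av123S n l) (permsOf (Finset.range n)) := by
    rw [avoiders]
    apply fset_congr
    intro l hl
    obtain ⟨hnd, htf⟩ := mem_permsOf.1 hl
    have hnl : n ∉ l := fun h => lt_irrefl n (hbd l hl n h)
    rw [e123 l n hnd hnl]
    have hp : ¬ P2 (fun b c => n < b ∧ b < c) l := by
      rintro ⟨b, c, hs, h1, h2⟩
      exact absurd (hbd l hl b (hs.subset (by simp))) (by omega)
    exact ⟨fun h => ⟨h, hp⟩, fun h => h.1⟩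
  have h2 : avoiders R132 (Finset.range n) =
      fset (fun l => Av132S n l) (permsOf (Finset.range n)) := by
    rw [avoiders]
    apply fset_congr
    intro l hl
    rw [e132 l n]
    have hp : ¬ P2 (fun b c => n < c ∧ c < b) l := by
      rintro ⟨b, c, hs, h1, h2⟩
      exact absurd (hbd l hl c (hs.subset (by simp))) (by omega)
    exact ⟨fun h => ⟨h, hp⟩, fun h => h.1⟩
  rw [h1, h2]
  exact ss_card (by simp)

/-! ### symmetries: reverse and complement -/

lemma ct_reverse {R : ℕ → ℕ → ℕ → Prop} {l : List ℕ} :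
    Ct R l.reverse ↔ Ct (fun a b c => R c b a) l := by
  constructor
  · rintro ⟨a, b, c, hs, hr⟩
    refine ⟨c, b, a, ?_, hr⟩
    have he : ([a, b, c] : List ℕ) = [c, b, a].reverse := rfl
    rw [he] at hs
    exact List.reverse_sublist.1 hs
  · rintro ⟨a, b, c, hs, hr⟩
    refine ⟨c, b, a, ?_, hr⟩
    have he : ([c, b, a] : List ℕ) = [a, b, c].reverse := rfl
    rw [he]
    exact List.reverse_sublist.2 hs

lemma ct_map {R : ℕ → ℕ → ℕ → Prop} {l : List ℕ} {f : ℕ → ℕ} :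
    Ct R (l.map f) ↔ Ct (fun a b c => R (f a) (f b) (f c)) l := by
  constructor
  · rintro ⟨a, b, c, hs, hr⟩
    rw [List.sublist_map_iff] at hs
    obtain ⟨l', hl', heq⟩ := hs
    match l', heq with
    | [a', b', c'], heq =>
      simp only [List.map_cons, List.map_nil, List.cons.injEq, and_true] at heq
      obtain ⟨rfl, rfl, rfl⟩ := heq
      exact ⟨a', b', c', hl', hr⟩
  · rintro ⟨a, b, c, hs, hr⟩
    exact ⟨f a, f b, f c, by simpa using hs.map f, hr⟩

lemma avoiders_congr {R R' : ℕ → ℕ → ℕ → Prop} {S : Finset ℕ}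
    (h : ∀ a b c, a ∈ S → b ∈ S → c ∈ S → (R a b c ↔ R' a b c)) :
    avoiders R S = avoiders R' S := by
  rw [avoiders, avoiders]
  apply fset_congr
  intro l hl
  obtain ⟨hnd, htf⟩ := mem_permsOf.1 hl
  exact not_congr (ct_congr (fun a b c ha hb hc =>
    h a b c (htf ▸ List.mem_toFinset.2 ha) (htf ▸ List.mem_toFinset.2 hb)
      (htf ▸ List.mem_toFinset.2 hc)))

lemma card_avoiders_rev (R : ℕ → ℕ → ℕ → Prop) (n : ℕ) :
    (avoiders R (Finset.range n)).card =
      (avoiders (fun a b c => R c b a) (Finset.range n)).card := by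
  refine Finset.card_bij' (fun l _ => l.reverse) (fun l _ => l.reverse) ?_ ?_ ?_ ?_
  · intro l hl
    obtain ⟨⟨hnd, htf⟩, hav⟩ := mem_avoiders.1 hl
    rw [mem_avoiders]
    refine ⟨⟨List.nodup_reverse.2 hnd, by rw [List.toFinset_reverse]; exact htf⟩, ?_⟩
    intro h
    rw [ct_reverse] at h
    exact hav h
  · intro l hl
    obtain ⟨⟨hnd, htf⟩, hav⟩ := mem_avoiders.1 hl
    rw [mem_avoiders]
    refine ⟨⟨List.nodup_reverse.2 hnd, by rw [List.toFinset_reverse]; exact htf⟩, ?_⟩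
    intro h
    rw [ct_reverse] at h
    exact hav h
  · intro l _; exact List.reverse_reverse l
  · intro l _; exact List.reverse_reverse l

lemma card_avoiders_compl (R : ℕ → ℕ → ℕ → Prop) (n : ℕ) :
    (avoiders R (Finset.range n)).card =
      (avoiders (fun a b c => R (n - 1 - a) (n - 1 - b) (n - 1 - c)) (Finset.range n)).card := by
  have hmm : ∀ {l : List ℕ}, l.toFinset = Finset.range n → ∀ a ∈ l, a < n := by
    intro l htf a ha
    exact Finset.mem_range.1 (htf ▸ List.mem_toFinset.2 ha)
  have hmap : ∀ {l : List ℕ}, l.Nodup → l.toFinset = Finset.range n →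
      (l.map (fun x => n - 1 - x)).Nodup ∧
        (l.map (fun x => n - 1 - x)).toFinset = Finset.range n := by
    intro l hnd htf
    have hbd := hmm htf
    constructor
    · exact hnd.map_on (fun x hx y hy hxy => by
        have := hbd x hx; have := hbd y hy; omega)
    · ext a
      simp only [List.mem_toFinset, List.mem_map, Finset.mem_range]
      constructor
      · rintro ⟨x, hx, rfl⟩
        have := hbd x hx
        omega
      · intro ha
        refine ⟨n - 1 - a, ?_, by omega⟩
        rw [← List.mem_toFinset, htf, Finset.mem_range]
        omega
  have hinv : ∀ {l : List ℕ}, l.toFinset = Finset.range n →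
      (l.map (fun x => n - 1 - x)).map (fun x => n - 1 - x) = l := by
    intro l htf
    rw [List.map_map]
    refine (List.map_congr_left (fun a ha => ?_)).trans (List.map_id l)
    have := hmm htf a ha
    show n - 1 - (n - 1 - a) = a
    omega
  refine Finset.card_bij' (fun l _ => l.map (fun x => n - 1 - x))
    (fun l _ => l.map (fun x => n - 1 - x)) ?_ ?_ ?_ ?_
  · intro l hl
    obtain ⟨⟨hnd, htf⟩, hav⟩ := mem_avoiders.1 hl
    obtain ⟨hnd', htf'⟩ := hmap hnd htf
    rw [mem_avoiders]
    refine ⟨⟨hnd', htf'⟩, ?_⟩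
    intro h
    rw [ct_map] at h
    apply hav
    refine (ct_congr (fun a b c ha hb hc => ?_)).1 h
    have hA := hmm htf a ha; have hB := hmm htf b hb; have hC := hmm htf c hc
    have e1 : n - 1 - (n - 1 - a) = a := by omega
    have e2 : n - 1 - (n - 1 - b) = b := by omega
    have e3 : n - 1 - (n - 1 - c) = c := by omega
    rw [e1, e2, e3]
  · intro l hl
    obtain ⟨⟨hnd, htf⟩, hav⟩ := mem_avoiders.1 hl
    obtain ⟨hnd', htf'⟩ := hmap hnd htf
    rw [mem_avoiders]
    refine ⟨⟨hnd', htf'⟩, ?_⟩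
    intro h
    rw [ct_map] at h
    exact hav h
  · intro l hl
    obtain ⟨⟨hnd, htf⟩, -⟩ := mem_avoiders.1 hl
    exact hinv htf
  · intro l hl
    obtain ⟨⟨hnd, htf⟩, -⟩ := mem_avoiders.1 hl
    exact hinv htf

/-! ### the six list-level counts -/

lemma cat132 (n : ℕ) : (avoiders R132 (Finset.range n)).card = catalan n :=
  count132 n (Finset.range n) (Finset.card_range n)

lemma cat123 (n : ℕ) : (avoiders R123 (Finset.range n)).card = catalan n := by
  rw [count123_eq_132, cat132]

lemma cat231 (n : ℕ) : (avoiders R231 (Finset.range n)).card = catalan n := by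
  have h := card_avoiders_rev R132 n
  have he : avoiders (fun a b c => R132 c b a) (Finset.range n) =
      avoiders R231 (Finset.range n) :=
    avoiders_congr (fun a b c _ _ _ => Iff.rfl)
  rw [he] at h
  rw [← h, cat132]

lemma cat321 (n : ℕ) : (avoiders R321 (Finset.range n)).card = catalan n := by
  have h := card_avoiders_rev R123 n
  have he : avoiders (fun a b c => R123 c b a) (Finset.range n) =
      avoiders R321 (Finset.range n) :=
    avoiders_congr (fun a b c _ _ _ => Iff.rfl)
  rw [he] at h
  rw [← h, cat123]

lemma cat312 (n : ℕ) : (avoiders R312 (Finset.range n)).card = catalan n := by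
  have h := card_avoiders_compl R132 n
  have he : avoiders (fun a b c => R132 (n - 1 - a) (n - 1 - b) (n - 1 - c)) (Finset.range n) =
      avoiders R312 (Finset.range n) := by
    apply avoiders_congr
    intro a b c ha hb hc
    rw [Finset.mem_range] at ha hb hc
    unfold R132 R312
    omega
  rw [he] at h
  rw [← h, cat132]

lemma cat213 (n : ℕ) : (avoiders R213 (Finset.range n)).card = catalan n := by
  have h := card_avoiders_rev R312 n
  have he : avoiders (fun a b c => R312 c b a) (Finset.range n) =
      avoiders R213 (Finset.range n) :=
    avoiders_congr (fun a b c _ _ _ => Iff.rfl)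
  rw [he] at h
  rw [← h, cat312]

/-! ### the bridge between permutations and lists -/

def toL {n : ℕ} (σ : Equiv.Perm (Fin n)) : List ℕ :=
  (List.finRange n).map (fun i => (σ i : ℕ))

lemma toL_length {n : ℕ} (σ : Equiv.Perm (Fin n)) : (toL σ).length = n := by
  simp [toL]

lemma toL_getElem {n : ℕ} (σ : Equiv.Perm (Fin n)) (i : ℕ) (h : i < (toL σ).length) :
    (toL σ)[i] = (σ ⟨i, by rwa [toL_length] at h⟩ : ℕ) := by
  simp only [toL, List.getElem_map, List.getElem_finRange]
  congr 1

lemma toL_getD {n : ℕ} (σ : Equiv.Perm (Fin n)) (i : Fin n) :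
    (toL σ).getD i.val 0 = (σ i : ℕ) := by
  have h : i.val < (toL σ).length := by rw [toL_length]; exact i.isLt
  rw [List.getD_eq_getElem _ _ h, toL_getElem]

lemma toL_get {n : ℕ} (σ : Equiv.Perm (Fin n)) (p : Fin (toL σ).length) :
    (toL σ).get p = (σ (Fin.cast (toL_length σ) p) : ℕ) := by
  rw [List.get_eq_getElem, toL_getElem]
  congr 1

lemma toL_mem {n : ℕ} (σ : Equiv.Perm (Fin n)) : toL σ ∈ permsOf (Finset.range n) := by
  rw [mem_permsOf]
  constructor
  · apply List.Nodup.map_on _ (List.nodup_finRange n)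
    intro x _ y _ hxy
    exact σ.injective (Fin.val_injective hxy)
  · ext a
    simp only [List.mem_toFinset, toL, List.mem_map, Finset.mem_range]
    constructor
    · rintro ⟨i, -, rfl⟩
      exact (σ i).isLt
    · intro ha
      exact ⟨σ.symm ⟨a, ha⟩, List.mem_finRange _, by simp⟩

lemma sorted_sublist {α : Type*} [LinearOrder α] :
    ∀ (l₂ l₁ : List α), l₁.Pairwise (· < ·) → l₂.Pairwise (· < ·) →
      (∀ x ∈ l₁, x ∈ l₂) → l₁ <+ l₂ := by
  intro l₂
  induction l₂ with
  | nil =>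
    intro l₁ _ _ hsub
    cases l₁ with
    | nil => exact List.Sublist.refl _
    | cons x xs => exact absurd (hsub x (List.mem_cons_self)) List.not_mem_nil
  | cons b t₂ ih =>
    intro l₁ h₁ h₂ hsub
    obtain ⟨hb, h₂'⟩ := List.pairwise_cons.1 h₂
    cases l₁ with
    | nil => exact List.nil_sublist _
    | cons a t₁ =>
      obtain ⟨ha, h₁'⟩ := List.pairwise_cons.1 h₁
      by_cases hab : a = b
      · subst hab
        apply List.cons_sublist_cons.2
        apply ih t₁ h₁' h₂'
        intro x hx
        have hax := ha x hx
        rcases List.mem_cons.1 (hsub x (List.mem_cons_of_mem _ hx)) with rfl | h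
        · exact absurd hax (lt_irrefl x)
        · exact h
      · have haT : a ∈ t₂ := by
          rcases List.mem_cons.1 (hsub a (List.mem_cons_self)) with h | h
          · exact absurd h hab
          · exact h
        have hba : b < a := hb a haT
        apply List.sublist_cons_of_sublist
        apply ih (a :: t₁) h₁ h₂'
        intro x hx
        rcases List.mem_cons.1 hx with rfl | hx'
        · exact haT
        · have hax := ha x hx'
          rcases List.mem_cons.1 (hsub x (List.mem_cons_of_mem _ hx')) with rfl | h
          · exact absurd (hba.trans hax) (lt_irrefl x)
          · exact h

lemma triple_sublist {n : ℕ} (σ : Equiv.Perm (Fin n)) {i j k : Fin n}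
    (hij : i < j) (hjk : j < k) :
    [(σ i : ℕ), (σ j : ℕ), (σ k : ℕ)] <+ toL σ := by
  have h1 : ([i, j, k] : List (Fin n)) <+ List.finRange n := by
    apply sorted_sublist
    · rw [List.pairwise_cons, List.pairwise_cons]
      refine ⟨?_, ?_, List.pairwise_singleton _ k⟩
      · intro b hb
        rcases List.mem_cons.1 hb with rfl | hb'
        · exact hij
        · rw [List.mem_singleton] at hb'
          subst hb'
          exact hij.trans hjk
      · intro b hb
        rw [List.mem_singleton] at hb
        subst hb
        exact hjk
    · exact List.pairwise_lt_finRange n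
    · intro x _
      exact List.mem_finRange x
  simpa [toL] using h1.map (fun i => ((σ i : ℕ)))

lemma ct_toL {n : ℕ} {σ : Equiv.Perm (Fin n)} {R : ℕ → ℕ → ℕ → Prop} (h : Ct R (toL σ)) :
    ∃ i j k : Fin n, i < j ∧ j < k ∧ R (σ i) (σ j) (σ k) := by
  obtain ⟨a, b, c, hs, hr⟩ := h
  rw [List.sublist_iff_exists_fin_orderEmbedding_get_eq] at hs
  obtain ⟨f, hf⟩ := hs
  have h0 : ([a, b, c] : List ℕ).get ⟨0, by simp⟩ = a := rfl
  have h1 : ([a, b, c] : List ℕ).get ⟨1, by simp⟩ = b := rfl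
  have h2 : ([a, b, c] : List ℕ).get ⟨2, by simp⟩ = c := rfl
  refine ⟨Fin.cast (toL_length σ) (f ⟨0, by simp⟩), Fin.cast (toL_length σ) (f ⟨1, by simp⟩),
    Fin.cast (toL_length σ) (f ⟨2, by simp⟩), ?_, ?_, ?_⟩
  · have := f.strictMono (show (⟨0, by simp⟩ : Fin ([a,b,c].length)) < ⟨1, by simp⟩ from
      Fin.mk_lt_mk.2 (by omega))
    rw [Fin.lt_def] at this ⊢
    simpa using this
  · have := f.strictMono (show (⟨1, by simp⟩ : Fin ([a,b,c].length)) < ⟨2, by simp⟩ from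
      Fin.mk_lt_mk.2 (by omega))
    rw [Fin.lt_def] at this ⊢
    simpa using this
  · have e0 := (hf ⟨0, by simp⟩).symm.trans h0
    have e1 := (hf ⟨1, by simp⟩).symm.trans h1
    have e2 := (hf ⟨2, by simp⟩).symm.trans h2
    rw [toL_get] at e0 e1 e2
    rw [← e0, ← e1, ← e2] at hr
    exact hr

lemma lt_flip {α : Type*} [LinearOrder α] {x y : α} (h : x ≠ y) : y < x ↔ ¬ x < y :=
  ⟨fun h1 h2 => absurd (h1.trans h2) (lt_irrefl _), fun h1 => h.lt_or_gt.resolve_left h1⟩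

lemma cp_iff {n : ℕ} (σ : Equiv.Perm (Fin n)) (τ : Equiv.Perm (Fin 3)) :
    ContainsPattern σ τ ↔ ∃ i j k : Fin n, i < j ∧ j < k ∧
      ((σ i < σ j ↔ τ 0 < τ 1) ∧ (σ i < σ k ↔ τ 0 < τ 2) ∧ (σ j < σ k ↔ τ 1 < τ 2)) := by
  have hcases : ∀ t : Fin 3, t = 0 ∨ t = 1 ∨ t = 2 := by decide
  constructor
  · rintro ⟨f, hmono, hiff⟩
    exact ⟨f 0, f 1, f 2, hmono (by decide), hmono (by decide),
      hiff 0 1, hiff 0 2, hiff 1 2⟩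
  · rintro ⟨i, j, k, hij, hjk, h01, h02, h12⟩
    have hσij : σ i ≠ σ j := fun e => absurd (σ.injective e) (ne_of_lt hij)
    have hσik : σ i ≠ σ k := fun e => absurd (σ.injective e) (ne_of_lt (hij.trans hjk))
    have hσjk : σ j ≠ σ k := fun e => absurd (σ.injective e) (ne_of_lt hjk)
    have hτ01 : τ 0 ≠ τ 1 := fun e => absurd (τ.injective e) (by decide)
    have hτ02 : τ 0 ≠ τ 2 := fun e => absurd (τ.injective e) (by decide)
    have hτ12 : τ 1 ≠ τ 2 := fun e => absurd (τ.injective e) (by decide)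
    set f : Fin 3 → Fin n := fun t => if t = 0 then i else if t = 1 then j else k with hfdef
    have hf0 : f 0 = i := rfl
    have hf1 : f 1 = j := rfl
    have hf2 : f 2 = k := rfl
    refine ⟨f, ?_, ?_⟩
    · intro a b hab
      rcases hcases a with rfl | rfl | rfl <;> rcases hcases b with rfl | rfl | rfl <;>
        simp only [hf0, hf1, hf2] <;>
        first
          | exact absurd hab (by decide)
          | exact hij
          | exact hjk
          | exact hij.trans hjk
    · intro a b
      rcases hcases a with rfl | rfl | rfl <;> rcases hcases b with rfl | rfl | rfl <;>
        simp only [hf0, hf1, hf2]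
      · exact iff_of_false (lt_irrefl _) (lt_irrefl _)
      · exact h01
      · exact h02
      · rw [lt_flip hσij, lt_flip hτ01]
        exact not_congr h01
      · exact iff_of_false (lt_irrefl _) (lt_irrefl _)
      · exact h12
      · rw [lt_flip hσik, lt_flip hτ02]
        exact not_congr h02
      · rw [lt_flip hσjk, lt_flip hτ12]
        exact not_congr h12
      · exact iff_of_false (lt_irrefl _) (lt_irrefl _)

lemma perm_count {n : ℕ} (τ : Equiv.Perm (Fin 3)) (R : ℕ → ℕ → ℕ → Prop)
    (hR : ∀ σ : Equiv.Perm (Fin n), ContainsPattern σ τ ↔ Ct R (toL σ)) :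
    Nat.card {σ : Equiv.Perm (Fin n) // ¬ ContainsPattern σ τ} =
      (avoiders R (Finset.range n)).card := by
  classical
  rw [Nat.card_eq_fintype_card, Fintype.card_subtype]
  refine Finset.card_bij (fun σ _ => toL σ) ?_ ?_ ?_
  · intro σ hσ
    rw [Finset.mem_filter] at hσ
    have h := toL_mem σ
    rw [mem_permsOf] at h
    rw [mem_avoiders]
    exact ⟨h, fun hc => hσ.2 ((hR σ).2 hc)⟩
  · intro σ1 h1 σ2 h2 he
    apply Equiv.ext
    intro i
    have := congrArg (fun l : List ℕ => l.getD i.val 0) he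
    simp only [toL_getD] at this
    exact Fin.val_injective this
  · intro l hl
    obtain ⟨⟨hnd, htf⟩, hav⟩ := mem_avoiders.1 hl
    have hlen : l.length = n := by
      rw [← List.toFinset_card_of_nodup hnd, htf, Finset.card_range]
    have hbd : ∀ (i : ℕ) (h : i < l.length), l[i] < n := by
      intro i h
      have : l[i] ∈ l := List.getElem_mem h
      exact Finset.mem_range.1 (htf ▸ List.mem_toFinset.2 this)
    have hginj : Function.Injective
        (fun i : Fin n => (⟨l[i.val]'(by omega), hbd _ _⟩ : Fin n)) := by
      intro x y hxy
      have h2 : l[x.val]'(by omega) = l[y.val]'(by omega) := congrArg Fin.val hxy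
      have h3 := List.nodup_iff_injective_get.1 hnd
        (show l.get ⟨x.val, by omega⟩ = l.get ⟨y.val, by omega⟩ by
          simpa [List.get_eq_getElem] using h2)
      have := congrArg Fin.val h3
      exact Fin.val_injective this
    set σ : Equiv.Perm (Fin n) :=
      Equiv.ofBijective _ (Finite.injective_iff_bijective.1 hginj) with hσdef
    have hσval : ∀ i : Fin n, (σ i : ℕ) = l[i.val]'(by omega) := fun i => rfl
    have htoL : toL σ = l := by
      apply List.ext_getElem (by rw [toL_length, hlen])
      intro t h1 h2
      rw [toL_getElem]
      exact hσval ⟨t, by rwa [toL_length] at h1⟩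
    refine ⟨σ, ?_, htoL⟩
    rw [Finset.mem_filter]
    refine ⟨Finset.mem_univ _, ?_⟩
    intro hc
    rw [hR σ, htoL] at hc
    exact hav hc

end CatAv

theorem catalan_count_avoiders (n : ℕ) (τ : Equiv.Perm (Fin 3)) :
    Nat.card {σ : Equiv.Perm (Fin n) // ¬ ContainsPattern σ τ} =
      Nat.choose (2 * n) n / (n + 1) := by
  have hcases : ∀ t : Fin 3, t = 0 ∨ t = 1 ∨ t = 2 := by decide
  have hcat : ∀ m : ℕ, catalan m = Nat.choose (2 * m) m / (m + 1) := by
    intro m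
    rw [catalan_eq_centralBinom_div]
    rfl
  rcases hcases (τ 0) with h0 | h0 | h0 <;> rcases hcases (τ 1) with h1 | h1 | h1 <;>
    rcases hcases (τ 2) with h2 | h2 | h2
  all_goals try exact absurd (τ.injective (h0.trans h1.symm)) (by decide)
  all_goals try exact absurd (τ.injective (h0.trans h2.symm)) (by decide)
  all_goals try exact absurd (τ.injective (h1.trans h2.symm)) (by decide)
  · refine (CatAv.perm_count τ CatAv.R123 ?_).trans ((CatAv.cat123 n).trans (hcat n))
    intro σ
    rw [CatAv.cp_iff σ τ]
    constructor
    · rintro ⟨i, j, k, hij, hjk, hc01, hc02, hc12⟩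
      rw [h0, h1] at hc01
      rw [h0, h2] at hc02
      rw [h1, h2] at hc12
      have ne01 : ((σ i : ℕ)) ≠ ((σ j : ℕ)) :=
        fun e => absurd (σ.injective (Fin.val_injective e)) (ne_of_lt hij)
      have ne02 : ((σ i : ℕ)) ≠ ((σ k : ℕ)) :=
        fun e => absurd (σ.injective (Fin.val_injective e)) (ne_of_lt (hij.trans hjk))
      have ne12 : ((σ j : ℕ)) ≠ ((σ k : ℕ)) :=
        fun e => absurd (σ.injective (Fin.val_injective e)) (ne_of_lt hjk)
      have c01 : ((σ i : ℕ) < (σ j : ℕ)) := Fin.lt_def.1 (hc01.2 (by decide))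
      have c02 : ((σ i : ℕ) < (σ k : ℕ)) := Fin.lt_def.1 (hc02.2 (by decide))
      have c12 : ((σ j : ℕ) < (σ k : ℕ)) := Fin.lt_def.1 (hc12.2 (by decide))
      exact ⟨(σ i : ℕ), (σ j : ℕ), (σ k : ℕ), CatAv.triple_sublist σ hij hjk,
        by constructor <;> omega⟩
    · intro hc
      obtain ⟨i, j, k, hij, hjk, hr⟩ := CatAv.ct_toL hc
      obtain ⟨hr1, hr2⟩ := hr
      refine ⟨i, j, k, hij, hjk, ?_, ?_, ?_⟩
      · rw [h0, h1]
        exact iff_of_true (Fin.lt_def.2 (by omega)) (by decide)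
      · rw [h0, h2]
        exact iff_of_true (Fin.lt_def.2 (by omega)) (by decide)
      · rw [h1, h2]
        exact iff_of_true (Fin.lt_def.2 (by omega)) (by decide)
  · refine (CatAv.perm_count τ CatAv.R132 ?_).trans ((CatAv.cat132 n).trans (hcat n))
    intro σ
    rw [CatAv.cp_iff σ τ]
    constructor
    · rintro ⟨i, j, k, hij, hjk, hc01, hc02, hc12⟩
      rw [h0, h1] at hc01
      rw [h0, h2] at hc02
      rw [h1, h2] at hc12
      have ne01 : ((σ i : ℕ)) ≠ ((σ j : ℕ)) :=
        fun e => absurd (σ.injective (Fin.val_injective e)) (ne_of_lt hij)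
      have ne02 : ((σ i : ℕ)) ≠ ((σ k : ℕ)) :=
        fun e => absurd (σ.injective (Fin.val_injective e)) (ne_of_lt (hij.trans hjk))
      have ne12 : ((σ j : ℕ)) ≠ ((σ k : ℕ)) :=
        fun e => absurd (σ.injective (Fin.val_injective e)) (ne_of_lt hjk)
      have c01 : ((σ i : ℕ) < (σ j : ℕ)) := Fin.lt_def.1 (hc01.2 (by decide))
      have c02 : ((σ i : ℕ) < (σ k : ℕ)) := Fin.lt_def.1 (hc02.2 (by decide))
      have c12 : ¬ ((σ j : ℕ) < (σ k : ℕ)) := fun h => absurd (hc12.1 (Fin.lt_def.2 h)) (by decide)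
      exact ⟨(σ i : ℕ), (σ j : ℕ), (σ k : ℕ), CatAv.triple_sublist σ hij hjk,
        by constructor <;> omega⟩
    · intro hc
      obtain ⟨i, j, k, hij, hjk, hr⟩ := CatAv.ct_toL hc
      obtain ⟨hr1, hr2⟩ := hr
      refine ⟨i, j, k, hij, hjk, ?_, ?_, ?_⟩
      · rw [h0, h1]
        exact iff_of_true (Fin.lt_def.2 (by omega)) (by decide)
      · rw [h0, h2]
        exact iff_of_true (Fin.lt_def.2 (by omega)) (by decide)
      · rw [h1, h2]
        exact iff_of_false (fun h => by rw [Fin.lt_def] at h; omega) (by decide)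
  · refine (CatAv.perm_count τ CatAv.R213 ?_).trans ((CatAv.cat213 n).trans (hcat n))
    intro σ
    rw [CatAv.cp_iff σ τ]
    constructor
    · rintro ⟨i, j, k, hij, hjk, hc01, hc02, hc12⟩
      rw [h0, h1] at hc01
      rw [h0, h2] at hc02
      rw [h1, h2] at hc12
      have ne01 : ((σ i : ℕ)) ≠ ((σ j : ℕ)) :=
        fun e => absurd (σ.injective (Fin.val_injective e)) (ne_of_lt hij)
      have ne02 : ((σ i : ℕ)) ≠ ((σ k : ℕ)) :=
        fun e => absurd (σ.injective (Fin.val_injective e)) (ne_of_lt (hij.trans hjk))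
      have ne12 : ((σ j : ℕ)) ≠ ((σ k : ℕ)) :=
        fun e => absurd (σ.injective (Fin.val_injective e)) (ne_of_lt hjk)
      have c01 : ¬ ((σ i : ℕ) < (σ j : ℕ)) := fun h => absurd (hc01.1 (Fin.lt_def.2 h)) (by decide)
      have c02 : ((σ i : ℕ) < (σ k : ℕ)) := Fin.lt_def.1 (hc02.2 (by decide))
      have c12 : ((σ j : ℕ) < (σ k : ℕ)) := Fin.lt_def.1 (hc12.2 (by decide))
      exact ⟨(σ i : ℕ), (σ j : ℕ), (σ k : ℕ), CatAv.triple_sublist σ hij hjk,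
        by constructor <;> omega⟩
    · intro hc
      obtain ⟨i, j, k, hij, hjk, hr⟩ := CatAv.ct_toL hc
      obtain ⟨hr1, hr2⟩ := hr
      refine ⟨i, j, k, hij, hjk, ?_, ?_, ?_⟩
      · rw [h0, h1]
        exact iff_of_false (fun h => by rw [Fin.lt_def] at h; omega) (by decide)
      · rw [h0, h2]
        exact iff_of_true (Fin.lt_def.2 (by omega)) (by decide)
      · rw [h1, h2]
        exact iff_of_true (Fin.lt_def.2 (by omega)) (by decide)
  · refine (CatAv.perm_count τ CatAv.R231 ?_).trans ((CatAv.cat231 n).trans (hcat n))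
    intro σ
    rw [CatAv.cp_iff σ τ]
    constructor
    · rintro ⟨i, j, k, hij, hjk, hc01, hc02, hc12⟩
      rw [h0, h1] at hc01
      rw [h0, h2] at hc02
      rw [h1, h2] at hc12
      have ne01 : ((σ i : ℕ)) ≠ ((σ j : ℕ)) :=
        fun e => absurd (σ.injective (Fin.val_injective e)) (ne_of_lt hij)
      have ne02 : ((σ i : ℕ)) ≠ ((σ k : ℕ)) :=
        fun e => absurd (σ.injective (Fin.val_injective e)) (ne_of_lt (hij.trans hjk))
      have ne12 : ((σ j : ℕ)) ≠ ((σ k : ℕ)) :=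
        fun e => absurd (σ.injective (Fin.val_injective e)) (ne_of_lt hjk)
      have c01 : ((σ i : ℕ) < (σ j : ℕ)) := Fin.lt_def.1 (hc01.2 (by decide))
      have c02 : ¬ ((σ i : ℕ) < (σ k : ℕ)) := fun h => absurd (hc02.1 (Fin.lt_def.2 h)) (by decide)
      have c12 : ¬ ((σ j : ℕ) < (σ k : ℕ)) := fun h => absurd (hc12.1 (Fin.lt_def.2 h)) (by decide)
      exact ⟨(σ i : ℕ), (σ j : ℕ), (σ k : ℕ), CatAv.triple_sublist σ hij hjk,
        by constructor <;> omega⟩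
    · intro hc
      obtain ⟨i, j, k, hij, hjk, hr⟩ := CatAv.ct_toL hc
      obtain ⟨hr1, hr2⟩ := hr
      refine ⟨i, j, k, hij, hjk, ?_, ?_, ?_⟩
      · rw [h0, h1]
        exact iff_of_true (Fin.lt_def.2 (by omega)) (by decide)
      · rw [h0, h2]
        exact iff_of_false (fun h => by rw [Fin.lt_def] at h; omega) (by decide)
      · rw [h1, h2]
        exact iff_of_false (fun h => by rw [Fin.lt_def] at h; omega) (by decide)
  · refine (CatAv.perm_count τ CatAv.R312 ?_).trans ((CatAv.cat312 n).trans (hcat n))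
    intro σ
    rw [CatAv.cp_iff σ τ]
    constructor
    · rintro ⟨i, j, k, hij, hjk, hc01, hc02, hc12⟩
      rw [h0, h1] at hc01
      rw [h0, h2] at hc02
      rw [h1, h2] at hc12
      have ne01 : ((σ i : ℕ)) ≠ ((σ j : ℕ)) :=
        fun e => absurd (σ.injective (Fin.val_injective e)) (ne_of_lt hij)
      have ne02 : ((σ i : ℕ)) ≠ ((σ k : ℕ)) :=
        fun e => absurd (σ.injective (Fin.val_injective e)) (ne_of_lt (hij.trans hjk))
      have ne12 : ((σ j : ℕ)) ≠ ((σ k : ℕ)) :=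
        fun e => absurd (σ.injective (Fin.val_injective e)) (ne_of_lt hjk)
      have c01 : ¬ ((σ i : ℕ) < (σ j : ℕ)) := fun h => absurd (hc01.1 (Fin.lt_def.2 h)) (by decide)
      have c02 : ¬ ((σ i : ℕ) < (σ k : ℕ)) := fun h => absurd (hc02.1 (Fin.lt_def.2 h)) (by decide)
      have c12 : ((σ j : ℕ) < (σ k : ℕ)) := Fin.lt_def.1 (hc12.2 (by decide))
      exact ⟨(σ i : ℕ), (σ j : ℕ), (σ k : ℕ), CatAv.triple_sublist σ hij hjk,
        by constructor <;> omega⟩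
    · intro hc
      obtain ⟨i, j, k, hij, hjk, hr⟩ := CatAv.ct_toL hc
      obtain ⟨hr1, hr2⟩ := hr
      refine ⟨i, j, k, hij, hjk, ?_, ?_, ?_⟩
      · rw [h0, h1]
        exact iff_of_false (fun h => by rw [Fin.lt_def] at h; omega) (by decide)
      · rw [h0, h2]
        exact iff_of_false (fun h => by rw [Fin.lt_def] at h; omega) (by decide)
      · rw [h1, h2]
        exact iff_of_true (Fin.lt_def.2 (by omega)) (by decide)
  · refine (CatAv.perm_count τ CatAv.R321 ?_).trans ((CatAv.cat321 n).trans (hcat n))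
    intro σ
    rw [CatAv.cp_iff σ τ]
    constructor
    · rintro ⟨i, j, k, hij, hjk, hc01, hc02, hc12⟩
      rw [h0, h1] at hc01
      rw [h0, h2] at hc02
      rw [h1, h2] at hc12
      have ne01 : ((σ i : ℕ)) ≠ ((σ j : ℕ)) :=
        fun e => absurd (σ.injective (Fin.val_injective e)) (ne_of_lt hij)
      have ne02 : ((σ i : ℕ)) ≠ ((σ k : ℕ)) :=
        fun e => absurd (σ.injective (Fin.val_injective e)) (ne_of_lt (hij.trans hjk))
      have ne12 : ((σ j : ℕ)) ≠ ((σ k : ℕ)) :=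
        fun e => absurd (σ.injective (Fin.val_injective e)) (ne_of_lt hjk)
      have c01 : ¬ ((σ i : ℕ) < (σ j : ℕ)) := fun h => absurd (hc01.1 (Fin.lt_def.2 h)) (by decide)
      have c02 : ¬ ((σ i : ℕ) < (σ k : ℕ)) := fun h => absurd (hc02.1 (Fin.lt_def.2 h)) (by decide)
      have c12 : ¬ ((σ j : ℕ) < (σ k : ℕ)) := fun h => absurd (hc12.1 (Fin.lt_def.2 h)) (by decide)
      exact ⟨(σ i : ℕ), (σ j : ℕ), (σ k : ℕ), CatAv.triple_sublist σ hij hjk,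
        by constructor <;> omega⟩
    · intro hc
      obtain ⟨i, j, k, hij, hjk, hr⟩ := CatAv.ct_toL hc
      obtain ⟨hr1, hr2⟩ := hr
      refine ⟨i, j, k, hij, hjk, ?_, ?_, ?_⟩
      · rw [h0, h1]
        exact iff_of_false (fun h => by rw [Fin.lt_def] at h; omega) (by decide)
      · rw [h0, h2]
        exact iff_of_false (fun h => by rw [Fin.lt_def] at h; omega) (by decide)
      · rw [h1, h2]
        exact iff_of_false (fun h => by rw [Fin.lt_def] at h; omega) (by decide)
end

section
/- The number of 132-avoiding permutations of [n] containing no increasing subsequence of length 3 equals 2^{n-1}, for every n ≥ 1. -/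
/-- `σ` avoids the pattern 132. -/
def Avoids132 {n : ℕ} (σ : Equiv.Perm (Fin n)) : Prop :=
  ¬ ∃ i₁ i₂ i₃ : Fin n, i₁ < i₂ ∧ i₂ < i₃ ∧ σ i₁ < σ i₃ ∧ σ i₃ < σ i₂

/-- No element has two larger elements after it. -/
def Good {n : ℕ} (σ : Equiv.Perm (Fin n)) : Prop :=
  ∀ i j k : Fin n, i < j → j < k → σ i < σ j → σ i < σ k → False

lemma good_iff {n : ℕ} (σ : Equiv.Perm (Fin n)) :
    (Avoids132 σ ∧ ¬ ∃ i₁ i₂ i₃ : Fin n, i₁ < i₂ ∧ i₂ < i₃ ∧ σ i₁ < σ i₂ ∧ σ i₂ < σ i₃) ↔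
      Good σ := by
  constructor
  · rintro ⟨h132, h123⟩ i j k hij hjk h1 h2
    rcases lt_trichotomy (σ j) (σ k) with h | h | h
    · exact h123 ⟨i, j, k, hij, hjk, h1, h⟩
    · exact (ne_of_lt hjk) (σ.injective h)
    · exact h132 ⟨i, j, k, hij, hjk, h2, h⟩
  · intro hg
    constructor
    · rintro ⟨i, j, k, hij, hjk, h1, h2⟩
      exact hg i j k hij hjk (h1.trans h2) h1
    · rintro ⟨i, j, k, hij, hjk, h1, h2⟩
      exact hg i j k hij hjk h1 (h1.trans h2)

/-- The first value of a `Good` permutation is the max or second max. -/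
lemma good_first {m : ℕ} (σ : Equiv.Perm (Fin (m + 2))) (h : Good σ) :
    m ≤ (σ 0).val := by
  by_contra hlt
  push_neg at hlt
  set a : Fin (m + 2) := σ.symm ⟨m, by omega⟩ with ha
  set b : Fin (m + 2) := σ.symm ⟨m + 1, by omega⟩ with hb
  have hsa : σ a = ⟨m, by omega⟩ := σ.apply_symm_apply _
  have hsb : σ b = ⟨m + 1, by omega⟩ := σ.apply_symm_apply _
  have ha0 : a ≠ 0 := by
    intro hh; rw [hh] at hsa
    rw [hsa] at hlt; simp at hlt
  have hb0 : b ≠ 0 := by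
    intro hh; rw [hh] at hsb
    rw [hsb] at hlt; simp at hlt
  have hab : a ≠ b := by
    intro hh; rw [hh, hsb] at hsa; simp [Fin.ext_iff] at hsa
  have hpa : (0 : Fin (m + 2)) < a := Fin.pos_of_ne_zero ha0
  have hpb : (0 : Fin (m + 2)) < b := Fin.pos_of_ne_zero hb0
  have h0a : σ 0 < σ a := by rw [hsa]; exact Fin.lt_def.mpr hlt
  have h0b : σ 0 < σ b := by
    rw [hsb]; exact Fin.lt_def.mpr (show (σ 0).val < m + 1 by omega)
  rcases lt_or_gt_of_ne hab with hc | hc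
  · exact h 0 a b hpa hc h0a h0b
  · exact h 0 b a hpb hc h0b h0a

/-- Collapse the top two values of `Fin (m+2)` onto the top of `Fin (m+1)`. -/
def minmap {m : ℕ} (a : Fin (m + 2)) : Fin (m + 1) := ⟨min a.val m, by omega⟩

lemma minmap_val {m : ℕ} (a : Fin (m + 2)) : (minmap a).val = min a.val m := rfl

lemma minmap_lt {m : ℕ} {a b : Fin (m + 2)} (h : minmap a < minmap b) : a < b := by
  rw [Fin.lt_def] at h ⊢
  rw [minmap_val, minmap_val] at h
  omega

/-- The top value selected by `b`. -/
def topval (m : ℕ) (b : Bool) : Fin (m + 2) :=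
  if b then Fin.last (m + 1) else ⟨m, by omega⟩

lemma topval_val_true (m : ℕ) : (topval m true).val = m + 1 := rfl

lemma topval_val_false (m : ℕ) : (topval m false).val = m := rfl

/-- The monotone embedding of `Fin (m+1)` into `Fin (m+2)` missing `topval m b`. -/
def emb {m : ℕ} (b : Bool) (x : Fin (m + 1)) : Fin (m + 2) :=
  if x.val = m ∧ b = false then Fin.last (m + 1) else x.castSucc

lemma emb_val_true {m : ℕ} (x : Fin (m + 1)) : (emb true x).val = x.val := by
  simp [emb]

lemma emb_val_false {m : ℕ} (x : Fin (m + 1)) :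
    (emb false x).val = if x.val = m then m + 1 else x.val := by
  simp only [emb]
  split_ifs with h1 h2 h3 <;> simp_all [Fin.last]

lemma emb_lt_emb {m : ℕ} (b : Bool) {x y : Fin (m + 1)} (h : x < y) : emb b x < emb b y := by
  have hx := x.isLt
  have hy := y.isLt
  have h' : x.val < y.val := h
  rw [Fin.lt_def]
  cases b
  · rw [emb_val_false, emb_val_false]
    split_ifs with h1 h2 <;> omega
  · rw [emb_val_true, emb_val_true]; exact h'

lemma emb_injective {m : ℕ} (b : Bool) : Function.Injective (emb (m := m) b) := by
  intro x y hxy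
  rcases lt_trichotomy x y with h | h | h
  · exact absurd hxy (ne_of_lt (emb_lt_emb b h))
  · exact h
  · exact absurd hxy.symm (ne_of_lt (emb_lt_emb b h))

lemma emb_lt_iff {m : ℕ} (b : Bool) {x y : Fin (m + 1)} : emb b x < emb b y ↔ x < y := by
  constructor
  · intro h
    rcases lt_trichotomy x y with h' | h' | h'
    · exact h'
    · rw [h'] at h; exact absurd h (lt_irrefl _)
    · exact absurd (emb_lt_emb b h') (not_lt_of_gt h)
  · exact emb_lt_emb b

lemma emb_ne_topval {m : ℕ} (b : Bool) (x : Fin (m + 1)) : emb b x ≠ topval m b := by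
  have hx := x.isLt
  intro hh
  have h := congrArg Fin.val hh
  cases b
  · rw [emb_val_false, topval_val_false] at h
    split_ifs at h <;> omega
  · rw [emb_val_true, topval_val_true] at h; omega

lemma minmap_emb {m : ℕ} (b : Bool) (x : Fin (m + 1)) : minmap (emb b x) = x := by
  have hx := x.isLt
  refine Fin.ext ?_
  rw [minmap_val]
  cases b
  · rw [emb_val_false]; split_ifs <;> omega
  · rw [emb_val_true]; omega

/-- forward map on underlying functions -/
def fwd {m : ℕ} (s : Fin (m + 2) → Fin (m + 2)) (i : Fin (m + 1)) : Fin (m + 1) :=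
  minmap (s i.succ)

/-- backward map on underlying functions -/
def bwd {m : ℕ} (b : Bool) (t : Fin (m + 1) → Fin (m + 1)) (j : Fin (m + 2)) : Fin (m + 2) :=
  Fin.cases (topval m b) (fun i => emb b (t i)) j

lemma fwd_injective {m : ℕ} (σ : Equiv.Perm (Fin (m + 2))) (hσ : Good σ) :
    Function.Injective (fwd σ) := by
  intro i j hij
  by_contra hne
  have hs : σ i.succ ≠ σ j.succ := fun hh =>
    hne (Fin.succ_injective _ (σ.injective hh))
  have h0 := good_first σ hσ
  have hij' := congrArg Fin.val hij
  rw [fwd, fwd, minmap_val, minmap_val] at hij'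
  have hi2 : (σ i.succ).val < m + 2 := (σ i.succ).isLt
  have hj2 : (σ j.succ).val < m + 2 := (σ j.succ).isLt
  have hvne : (σ i.succ).val ≠ (σ j.succ).val := fun hh => hs (Fin.ext hh)
  have h0i : σ 0 ≠ σ i.succ := fun hh => (Fin.succ_ne_zero i) (σ.injective hh).symm
  have h0j : σ 0 ≠ σ j.succ := fun hh => (Fin.succ_ne_zero j) (σ.injective hh).symm
  have h0i' : (σ 0).val ≠ (σ i.succ).val := fun hh => h0i (Fin.ext hh)
  have h0j' : (σ 0).val ≠ (σ j.succ).val := fun hh => h0j (Fin.ext hh)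
  have h02 : (σ 0).val < m + 2 := (σ 0).isLt
  omega

lemma bwd_injective {m : ℕ} (b : Bool) (τ : Equiv.Perm (Fin (m + 1))) :
    Function.Injective (bwd b τ) := by
  intro i j hij
  induction i using Fin.cases with
  | zero =>
    induction j using Fin.cases with
    | zero => rfl
    | succ j' =>
      rw [bwd, bwd, Fin.cases_zero, Fin.cases_succ] at hij
      exact absurd hij.symm (emb_ne_topval b _)
  | succ i' =>
    induction j using Fin.cases with
    | zero =>
      rw [bwd, bwd, Fin.cases_zero, Fin.cases_succ] at hij
      exact absurd hij (emb_ne_topval b _)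
    | succ j' =>
      rw [bwd, bwd, Fin.cases_succ, Fin.cases_succ] at hij
      exact congrArg Fin.succ (τ.injective (emb_injective b hij))

/-- Good is preserved by bwd -/
lemma good_bwd {m : ℕ} (b : Bool) (τ : Equiv.Perm (Fin (m + 1))) (hτ : Good τ)
    (σ : Equiv.Perm (Fin (m + 2))) (hcoe : ∀ j, σ j = bwd b τ j) : Good σ := by
  intro i j k hij hjk h1 h2
  rw [hcoe i, hcoe j] at h1
  rw [hcoe i, hcoe k] at h2
  induction i using Fin.cases with
  | zero =>
    induction j using Fin.cases with
    | zero => exact lt_irrefl _ hij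
    | succ j' =>
      induction k using Fin.cases with
      | zero => exact absurd hjk (by simp [Fin.lt_def])
      | succ k' =>
        rw [bwd, bwd, Fin.cases_zero, Fin.cases_succ] at h1
        rw [bwd, bwd, Fin.cases_zero, Fin.cases_succ] at h2
        have hj' : (τ j').val = m := by
          by_contra hh
          have := Fin.lt_def.mp h1
          have hb := (τ j').isLt
          cases b
          · rw [topval_val_false, emb_val_false] at this
            split_ifs at this <;> omega
          · rw [topval_val_true, emb_val_true] at this; omega
        have hk' : (τ k').val = m := by
          by_contra hh
          have := Fin.lt_def.mp h2
          have hb := (τ k').isLt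
          cases b
          · rw [topval_val_false, emb_val_false] at this
            split_ifs at this <;> omega
          · rw [topval_val_true, emb_val_true] at this; omega
        have : j' = k' := τ.injective (Fin.ext (hj'.trans hk'.symm))
        rw [this] at hjk
        exact lt_irrefl _ hjk
  | succ i' =>
    induction j using Fin.cases with
    | zero => exact absurd hij (by simp [Fin.lt_def])
    | succ j' =>
      induction k using Fin.cases with
      | zero => exact absurd hjk (by simp [Fin.lt_def])
      | succ k' =>
        rw [bwd, bwd, Fin.cases_succ, Fin.cases_succ] at h1
        rw [bwd, bwd, Fin.cases_succ, Fin.cases_succ] at h2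
        exact hτ i' j' k' (Fin.succ_lt_succ_iff.mp hij) (Fin.succ_lt_succ_iff.mp hjk)
          ((emb_lt_iff b).mp h1) ((emb_lt_iff b).mp h2)

/-- Good is preserved by fwd -/
lemma good_fwd {m : ℕ} (σ : Equiv.Perm (Fin (m + 2))) (hσ : Good σ)
    (τ : Equiv.Perm (Fin (m + 1))) (hcoe : ∀ i, τ i = fwd σ i) : Good τ := by
  intro i j k hij hjk h1 h2
  rw [hcoe i, hcoe j] at h1
  rw [hcoe i, hcoe k] at h2
  exact hσ i.succ j.succ k.succ (Fin.succ_lt_succ_iff.mpr hij)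
    (Fin.succ_lt_succ_iff.mpr hjk) (minmap_lt h1) (minmap_lt h2)

/-- pointwise left inverse -/
lemma bwd_fwd {m : ℕ} (σ : Equiv.Perm (Fin (m + 2))) (hσ : Good σ) (j : Fin (m + 2)) :
    bwd (decide (σ 0 = Fin.last (m + 1))) (fwd σ) j = σ j := by
  have h0 := good_first σ hσ
  have h02 : (σ 0).val < m + 2 := (σ 0).isLt
  induction j using Fin.cases with
  | zero =>
    rw [bwd, Fin.cases_zero]
    refine Fin.ext ?_
    by_cases hb : σ 0 = Fin.last (m + 1)
    · rw [show decide (σ 0 = Fin.last (m + 1)) = true by simp [hb]]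
      rw [topval_val_true, hb, Fin.val_last]
    · have : (σ 0).val ≠ m + 1 := fun hh => hb (Fin.ext (by simp [Fin.last, hh]))
      rw [show decide (σ 0 = Fin.last (m + 1)) = false by simp [hb]]
      rw [topval_val_false]
      omega
  | succ i =>
    rw [bwd, Fin.cases_succ]
    have h0i : σ 0 ≠ σ i.succ := fun hh => (Fin.succ_ne_zero i) (σ.injective hh).symm
    have h0i' : (σ 0).val ≠ (σ i.succ).val := fun hh => h0i (Fin.ext hh)
    have hi2 : (σ i.succ).val < m + 2 := (σ i.succ).isLt
    refine Fin.ext ?_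
    rw [fwd]
    by_cases hb : σ 0 = Fin.last (m + 1)
    · have h0v : (σ 0).val = m + 1 := by rw [hb]; rfl
      rw [show decide (σ 0 = Fin.last (m + 1)) = true by simp [hb]]
      rw [emb_val_true, minmap_val]
      omega
    · have h0v : (σ 0).val = m := by
        have : (σ 0).val ≠ m + 1 := fun hh => hb (Fin.ext (by simp [Fin.last, hh]))
        omega
      rw [show decide (σ 0 = Fin.last (m + 1)) = false by simp [hb]]
      rw [emb_val_false, minmap_val]
      split_ifs with h <;> omega

/-- pointwise right inverses -/
lemma fwd_bwd {m : ℕ} (b : Bool) (t : Fin (m + 1) → Fin (m + 1)) (i : Fin (m + 1)) :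
    fwd (bwd b t) i = t i := by
  rw [fwd, bwd, Fin.cases_succ]
  exact minmap_emb b (t i)

lemma bwd_zero {m : ℕ} (b : Bool) (t : Fin (m + 1) → Fin (m + 1)) :
    bwd b t 0 = topval m b := by
  rw [bwd, Fin.cases_zero]



/-- The key recursive equivalence. -/
noncomputable def goodEquiv (m : ℕ) :
    {σ : Equiv.Perm (Fin (m + 2)) // Good σ} ≃
      Bool × {τ : Equiv.Perm (Fin (m + 1)) // Good τ} where
  toFun := fun ⟨σ, hσ⟩ =>
    ⟨decide (σ 0 = Fin.last (m + 1)),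
     Equiv.ofBijective (fwd σ) (Finite.injective_iff_bijective.mp (fwd_injective σ hσ)),
     good_fwd σ hσ _ (fun i => rfl)⟩
  invFun := fun ⟨b, τ, hτ⟩ =>
    ⟨Equiv.ofBijective (bwd b τ) (Finite.injective_iff_bijective.mp (bwd_injective b τ)),
     good_bwd b τ hτ _ (fun j => rfl)⟩
  left_inv := fun ⟨σ, hσ⟩ => by
    refine Subtype.ext (Equiv.ext fun j => ?_)
    exact bwd_fwd σ hσ j
  right_inv := fun ⟨b, τ, hτ⟩ => by
    refine Prod.ext ?_ (Subtype.ext (Equiv.ext fun i => ?_))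
    · show decide (bwd b τ 0 = Fin.last (m + 1)) = b
      rw [bwd_zero]
      cases b
      · simp [topval, Fin.ext_iff, Fin.last]
      · simp [topval]
    · exact fwd_bwd b τ i

lemma card_good : ∀ m : ℕ, Nat.card {σ : Equiv.Perm (Fin (m + 1)) // Good σ} = 2 ^ m := by
  intro m
  induction m with
  | zero =>
    have h : ∀ σ : Equiv.Perm (Fin 1), Good σ := by
      intro σ i j k hij hjk _ _
      exact absurd (hij.trans hjk) (by simp [Subsingleton.elim i k])
    rw [Nat.card_congr (Equiv.subtypeUnivEquiv h)]
    simp [Nat.card_eq_fintype_card]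
  | succ m ih =>
    rw [Nat.card_congr (goodEquiv m), Nat.card_prod, ih]
    simp [Nat.card_eq_fintype_card]
    ring

/-- The number of 132-avoiding permutations of `[n]` with no increasing subsequence of
length 3 equals `2^(n-1)`, for `n ≥ 1`. -/
theorem count_no_increasing_three (n : ℕ) (hn : 1 ≤ n) :
    Nat.card {σ : Equiv.Perm (Fin n) //
        Avoids132 σ ∧ ¬ ∃ i₁ i₂ i₃ : Fin n, i₁ < i₂ ∧ i₂ < i₃ ∧ σ i₁ < σ i₂ ∧ σ i₂ < σ i₃} =
      2 ^ (n - 1) := by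
  obtain ⟨m, rfl⟩ : ∃ m, n = m + 1 := ⟨n - 1, by omega⟩
  rw [Nat.card_congr (Equiv.subtypeEquivRight fun σ => good_iff σ)]
  rw [card_good m]
  simp
end

section
/- With B(t) as in equation (Balone) and C(t) the Catalan generating function, one has B(t) = [2t²-4t+1+(2t-1)√(1-4t)] / [(2t²-t+1)√(1-4t) + (1-t)(1-4t)] as an identity of analytic functions near 0. -/
/-- The closed form for `B(t)` with rationalized numerator: for `0 < t < 1/4`, with
`C(t) = (1-√(1-4t))/(2t)`,
`t²(C-1)² / [((1-t)(1-2tC)+t)(1-t-tC) - t²(C-1)]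
  = [2t²-4t+1+(2t-1)√(1-4t)] / [(2t²-t+1)√(1-4t) + (1-t)(1-4t)]`. -/
theorem B_closed_form (t : ℝ) (ht0 : 0 < t) (ht : t < 1 / 4) :
    (let C := (1 - Real.sqrt (1 - 4 * t)) / (2 * t)
     t ^ 2 * (C - 1) ^ 2 /
      (((1 - t) * (1 - 2 * t * C) + t) * (1 - t - t * C) - t ^ 2 * (C - 1))) =
    (2 * t ^ 2 - 4 * t + 1 + (2 * t - 1) * Real.sqrt (1 - 4 * t)) /
      ((2 * t ^ 2 - t + 1) * Real.sqrt (1 - 4 * t) + (1 - t) * (1 - 4 * t)) := by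
  have h4 : (0:ℝ) < 1 - 4 * t := by linarith
  have ht' : t ≠ 0 := ne_of_gt ht0
  set s := Real.sqrt (1 - 4 * t) with hsdef
  have hs2 : s ^ 2 = 1 - 4 * t := Real.sq_sqrt h4.le
  have hs0 : 0 < s := Real.sqrt_pos.mpr h4
  show t ^ 2 * ((1 - s) / (2 * t) - 1) ^ 2 /
      (((1 - t) * (1 - 2 * t * ((1 - s) / (2 * t))) + t) * (1 - t - t * ((1 - s) / (2 * t)))
        - t ^ 2 * ((1 - s) / (2 * t) - 1)) =
    (2 * t ^ 2 - 4 * t + 1 + (2 * t - 1) * s) /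
      ((2 * t ^ 2 - t + 1) * s + (1 - t) * (1 - 4 * t))
  have hD2 : 0 < (2 * t ^ 2 - t + 1) * s + (1 - t) * (1 - 4 * t) := by
    have h1 : 0 < 2 * t ^ 2 - t + 1 := by nlinarith
    have h2 : 0 < (1 - t) * (1 - 4 * t) := by nlinarith
    nlinarith
  have hN : t ^ 2 * ((1 - s) / (2 * t) - 1) ^ 2
      = (2 * t ^ 2 - 4 * t + 1 + (2 * t - 1) * s) / 2 := by
    field_simp
    linear_combination hs2
  have hD : ((1 - t) * (1 - 2 * t * ((1 - s) / (2 * t))) + t) * (1 - t - t * ((1 - s) / (2 * t)))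
        - t ^ 2 * ((1 - s) / (2 * t) - 1)
      = ((2 * t ^ 2 - t + 1) * s + (1 - t) * (1 - 4 * t)) / 2 := by
    field_simp
    linear_combination (1 - t) * hs2
  rw [hN, hD]
  rw [div_div_div_eq, mul_comm]
  exact mul_div_mul_left _ _ two_ne_zero
end
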